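/- arXiv:1909.11565 — 4 statements merged into one kernel-verified Lean document; each statement's English description precedes it below -/
import Mathlib

section
/- Let G=(V,E) be a simple, connected, d-regular graph and let {x,y}∈E be an edge. If κ_LLY(x,y) > 0, then κ₀(x,y) ≥ 0. -/
open Filter
open scoped Classical

variable {V : Type*}

/-- The probability measure `μ_x^p` with idleness parameter `p`, on a `d`-regular graph:
`μ_x^p(x) = p`, `μ_x^p(z) = (1-p)/d` for `z` adjacent to `x`, and `0` otherwise. -/
noncomputable def muMeasure (G : SimpleGraph V) (d : ℕ) (p : ℝ) (x : V) : V → ℝ :=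
  fun z => if z = x then p else if G.Adj x z then (1 - p) / d else 0

/-- `π` is a transport plan transporting `μ₁` to `μ₂`. -/
def IsTransportPlan (μ₁ μ₂ : V → ℝ) (π : V → V → ℝ) : Prop :=
  (∀ u v, 0 ≤ π u v) ∧ (∀ u, ∑' v, π u v = μ₁ u) ∧ (∀ v, ∑' u, π u v = μ₂ v)

/-- The cost of a transport plan: `∑_{u,v} d(u,v) π(u,v)`. -/
noncomputable def transportCost (G : SimpleGraph V) (π : V → V → ℝ) : ℝ :=
  ∑' q : V × V, (G.dist q.1 q.2 : ℝ) * π q.1 q.2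

/-- The Wasserstein distance `W₁(μ₁, μ₂)`: infimum of costs over all transport plans. -/
noncomputable def W1 (G : SimpleGraph V) (μ₁ μ₂ : V → ℝ) : ℝ :=
  sInf {c : ℝ | ∃ π, IsTransportPlan μ₁ μ₂ π ∧ transportCost G π = c}

/-- The `p`-Ollivier Ricci curvature `κ_p(x,y) = 1 - W₁(μ_x^p, μ_y^p)` in a `d`-regular graph. -/
noncomputable def kappa (G : SimpleGraph V) (d : ℕ) (p : ℝ) (x y : V) : ℝ :=
  1 - W1 G (muMeasure G d p x) (muMeasure G d p y)

/-- The Lin–Lu–Yau curvature `κ_LLY(x,y) = lim_{p→1} κ_p(x,y)/(1-p)`. -/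
noncomputable def kappaLLY (G : SimpleGraph V) (d : ℕ) (x y : V) : ℝ :=
  limUnder (nhdsWithin 1 (Set.Iio (1 : ℝ))) fun p => kappa G d p x y / (1 - p)

namespace StmtZeroAux

open Finset

lemma cost_nonneg (G : SimpleGraph V) {π : V → V → ℝ} (h : ∀ u v, 0 ≤ π u v) :
    0 ≤ transportCost G π :=
  tsum_nonneg fun q => mul_nonneg (by positivity) (h q.1 q.2)

lemma bddBelow_costSet (G : SimpleGraph V) (μ₁ μ₂ : V → ℝ) :
    BddBelow {c : ℝ | ∃ π, IsTransportPlan μ₁ μ₂ π ∧ transportCost G π = c} := by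
  refine ⟨0, fun c hc => ?_⟩
  obtain ⟨π, hπ, rfl⟩ := hc
  exact cost_nonneg G hπ.1

lemma not_summable_of_one_le {f : V → ℝ} {J : Set V} (hJ : J.Infinite)
    (h1 : ∀ i ∈ J, 1 ≤ f i) : ¬ Summable f := by
  intro hs
  have h3 : ∀ᶠ i in Filter.cofinite, f i < 1 :=
    hs.tendsto_cofinite_zero.eventually_lt_const one_pos
  exact hJ ((Filter.eventually_cofinite.mp h3).subset fun i hi => not_lt.2 (h1 i hi))

lemma mu_nonneg (G : SimpleGraph V) (d : ℕ) {q : ℝ} (h0 : 0 ≤ q) (h1 : q ≤ 1) (w z : V) :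
    0 ≤ muMeasure G d q w z := by
  unfold muMeasure
  split_ifs
  · exact h0
  · have : (0:ℝ) ≤ 1 - q := by linarith
    positivity
  · exact le_refl 0

lemma mu_mul_sum [Fintype V] (G : SimpleGraph V) [G.LocallyFinite] (d : ℕ) (q : ℝ) (w : V)
    (φ : V → ℝ) :
    ∑ z, muMeasure G d q w z * φ z
      = q * φ w + ((1 - q)/d) * ∑ z ∈ G.neighborFinset w, φ z := by
  have key : ∀ z, muMeasure G d q w z * φ z
      = (if z = w then q * φ w else 0)
        + (if z ∈ G.neighborFinset w then ((1 - q)/d) * φ z else 0) := by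
    intro z
    by_cases h1 : z = w
    · subst h1
      simp [muMeasure, G.irrefl]
    · by_cases h2 : G.Adj w z
      · simp [muMeasure, h1, h2, SimpleGraph.mem_neighborFinset]
      · simp [muMeasure, h1, h2, SimpleGraph.mem_neighborFinset]
  simp_rw [key]
  rw [Finset.sum_add_distrib, Finset.sum_ite_eq' Finset.univ w (fun z => q * φ w),
    Finset.sum_ite_mem, Finset.univ_inter, Finset.mul_sum]
  simp

lemma mu_total [Fintype V] (G : SimpleGraph V) [G.LocallyFinite] {d : ℕ} (hd : 0 < d)
    (hreg : G.IsRegularOfDegree d) (q : ℝ) (w : V) :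
    ∑ z, muMeasure G d q w z = 1 := by
  have := mu_mul_sum G d q w (fun _ => 1)
  simp only [mul_one] at this
  rw [this, Finset.sum_const, G.card_neighborFinset_eq_degree, hreg w, nsmul_eq_mul, mul_one]
  have hd' : (d:ℝ) ≠ 0 := Nat.cast_ne_zero.mpr hd.ne'
  field_simp
  ring

lemma mu_zero_support (G : SimpleGraph V) (d : ℕ) (x z : V) (hz : ¬ G.Adj x z) :
    muMeasure G d 0 x z = 0 := by
  unfold muMeasure
  by_cases h : z = x <;> simp [h, hz]

lemma mu_zero_tsum (G : SimpleGraph V) [G.LocallyFinite] {d : ℕ} (hd : 0 < d)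
    (hreg : G.IsRegularOfDegree d) (x : V) :
    ∑' z, muMeasure G d 0 x z = 1 := by
  rw [tsum_eq_sum (s := G.neighborFinset x)
    (fun z hz => mu_zero_support G d x z (by simpa [SimpleGraph.mem_neighborFinset] using hz))]
  have : ∀ z ∈ G.neighborFinset x, muMeasure G d 0 x z = 1/(d:ℝ) := by
    intro z hz
    rw [SimpleGraph.mem_neighborFinset] at hz
    have hzx : z ≠ x := fun h => G.irrefl (h ▸ hz)
    simp [muMeasure, hzx, hz]
  rw [Finset.sum_congr rfl this, Finset.sum_const, G.card_neighborFinset_eq_degree, hreg x,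
    nsmul_eq_mul]
  field_simp

lemma infinite_case (G : SimpleGraph V) [G.LocallyFinite] (hconn : G.Connected)
    (d : ℕ) (hreg : G.IsRegularOfDegree d) (x y : V) (hxy : G.Adj x y)
    (hV : Infinite V) : 0 ≤ kappa G d 0 x y := by
  have hd : 0 < d := by
    have : y ∈ G.neighborFinset x := (SimpleGraph.mem_neighborFinset G x y).mpr hxy
    have := Finset.card_pos.mpr ⟨y, this⟩
    rwa [G.card_neighborFinset_eq_degree, hreg x] at this
  set μ₁ := muMeasure G d 0 x with hμ₁
  set μ₂ := muMeasure G d 0 y with hμ₂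
  -- finite "support" region
  set F0 : Set V := (G.neighborFinset x : Set V) ∪ (G.neighborFinset y : Set V) with hF0
  have hF0fin : F0.Finite := (Set.finite_coe_iff.mp ?_).union (Set.finite_coe_iff.mp ?_)
  rotate_left
  · exact Set.finite_coe_iff.mpr (Finset.finite_toSet _)
  · exact Set.finite_coe_iff.mpr (Finset.finite_toSet _)
  set J : Set V := F0ᶜ with hJ
  have hJinf : J.Infinite := hF0fin.infinite_compl
  have hμ₁J : ∀ u ∈ J, μ₁ u = 0 := by
    intro u hu
    refine mu_zero_support G d x u ?_
    intro hadj
    exact hu (Or.inl (by simpa [SimpleGraph.mem_neighborFinset] using hadj))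
  have hμ₂J : ∀ u ∈ J, μ₂ u = 0 := by
    intro u hu
    refine mu_zero_support G d y u ?_
    intro hadj
    exact hu (Or.inr (by simpa [SimpleGraph.mem_neighborFinset] using hadj))
  set π : V → V → ℝ := fun u v => μ₁ u * μ₂ v + (if u ∈ J ∧ v ∈ J then 1 else 0) with hπdef
  have hπpos : ∀ u v, 0 ≤ π u v := by
    intro u v
    have h1 : 0 ≤ μ₁ u * μ₂ v := by
      refine mul_nonneg ?_ ?_ <;>
      · simp only [hμ₁, hμ₂]
        unfold muMeasure
        split_ifs <;> first | exact le_refl 0 | positivity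
    have h2 : (0:ℝ) ≤ if u ∈ J ∧ v ∈ J then 1 else 0 := by split_ifs <;> norm_num
    exact add_nonneg h1 h2
  have hplan : IsTransportPlan μ₁ μ₂ π := by
    refine ⟨hπpos, fun u => ?_, fun v => ?_⟩
    · by_cases hu : u ∈ J
      · have : (fun v => π u v) = fun v => if v ∈ J then 1 else 0 := by
          funext v
          simp only [hπdef, hμ₁J u hu, zero_mul, zero_add]
          by_cases hv : v ∈ J <;> simp [hu, hv]
        rw [this, tsum_eq_zero_of_not_summable, hμ₁J u hu]
        apply not_summable_of_one_le hJinf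
        intro i hi; simp [hi]
      · have : (fun v => π u v) = fun v => μ₁ u * μ₂ v := by
          funext v; simp [hπdef, hu]
        rw [this, tsum_mul_left, mu_zero_tsum G hd hreg y, mul_one]
    · by_cases hv : v ∈ J
      · have : (fun u => π u v) = fun u => if u ∈ J then 1 else 0 := by
          funext u
          simp only [hπdef, hμ₂J v hv, mul_zero, zero_add]
          by_cases hu : u ∈ J <;> simp [hu, hv]
        rw [this, tsum_eq_zero_of_not_summable, hμ₂J v hv]
        apply not_summable_of_one_le hJinf
        intro i hi; simp [hi]
      · have : (fun u => π u v) = fun u => μ₂ v * μ₁ u := by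
          funext u; simp [hπdef, hv, mul_comm]
        rw [this, tsum_mul_left, mu_zero_tsum G hd hreg x, mul_one]
  have hcost : transportCost G π = 0 := by
    apply tsum_eq_zero_of_not_summable
    intro hs
    obtain ⟨u0, hu0⟩ := hJinf.nonempty
    have hs2 : Summable (fun v => (G.dist u0 v : ℝ) * π u0 v) := by
      exact hs.comp_injective (i := fun v : V => ((u0, v) : V × V))
        (fun a b hab => by simpa using congrArg Prod.snd hab)
    refine not_summable_of_one_le (J := J \ {u0}) (hJinf.diff (Set.finite_singleton u0)) ?_ hs2
    intro v hv
    have hvJ : v ∈ J := hv.1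
    have hvne : v ≠ u0 := by simpa using hv.2
    have hdist : 1 ≤ G.dist u0 v :=
      hconn.pos_dist_of_ne (fun h => hvne h.symm)
    have hπ1 : 1 ≤ π u0 v := by
      have h1 : 0 ≤ μ₁ u0 * μ₂ v := mul_nonneg (by rw [hμ₁J u0 hu0]) (by rw [hμ₂J v hvJ])
      simp only [hπdef, hu0, hvJ, and_self, if_true]
      linarith
    calc (1:ℝ) = 1 * 1 := by norm_num
      _ ≤ (G.dist u0 v : ℝ) * π u0 v := by
          apply mul_le_mul _ hπ1 (by norm_num) (by positivity)
          exact_mod_cast hdist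
  have hW : W1 G μ₁ μ₂ ≤ 0 := by
    have : (0:ℝ) ∈ {c : ℝ | ∃ π, IsTransportPlan μ₁ μ₂ π ∧ transportCost G π = c} :=
      ⟨π, hplan, hcost⟩
    exact csInf_le (bddBelow_costSet G μ₁ μ₂) this
  have : kappa G d 0 x y = 1 - W1 G μ₁ μ₂ := rfl
  rw [this]; linarith

lemma prod_plan [Fintype V] (G : SimpleGraph V) [G.LocallyFinite] {d : ℕ} (hd : 0 < d)
    (hreg : G.IsRegularOfDegree d) {q : ℝ} (h0 : 0 ≤ q) (h1 : q ≤ 1) (x y : V) :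
    IsTransportPlan (muMeasure G d q x) (muMeasure G d q y)
      (fun u v => muMeasure G d q x u * muMeasure G d q y v) := by
  refine ⟨fun u v => mul_nonneg (mu_nonneg G d h0 h1 x u) (mu_nonneg G d h0 h1 y v),
    fun u => ?_, fun v => ?_⟩
  · rw [tsum_fintype, ← Finset.mul_sum, mu_total G hd hreg q y, mul_one]
  · rw [tsum_fintype]
    have : ∀ u, muMeasure G d q x u * muMeasure G d q y v
        = muMeasure G d q y v * muMeasure G d q x u := fun u => mul_comm _ _
    rw [Finset.sum_congr rfl (fun u _ => this u), ← Finset.mul_sum,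
      mu_total G hd hreg q x, mul_one]

lemma weak_duality [Fintype V] (G : SimpleGraph V) [G.LocallyFinite] {d : ℕ} (hd : 0 < d)
    (q : ℝ) (x y : V) (F : V → ℝ) (hF : ∀ u v : V, F v - F u ≤ (G.dist u v : ℝ))
    {π : V → V → ℝ} (hπ : IsTransportPlan (muMeasure G d q x) (muMeasure G d q y) π) :
    q * (F y - F x) + ((1 - q)/d) *
        ((∑ v ∈ G.neighborFinset y, F v) - ∑ u ∈ G.neighborFinset x, F u)
      ≤ transportCost G π := by
  obtain ⟨hpos, hrow, hcol⟩ := hπ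
  have hcost : transportCost G π = ∑ u, ∑ v, (G.dist u v : ℝ) * π u v := by
    rw [transportCost, tsum_fintype, ← Finset.univ_product_univ, Finset.sum_product]
  have step1 : ∑ u, ∑ v, (F v - F u) * π u v ≤ transportCost G π := by
    rw [hcost]
    refine Finset.sum_le_sum fun u _ => Finset.sum_le_sum fun v _ => ?_
    exact mul_le_mul_of_nonneg_right (hF u v) (hpos u v)
  have step2 : ∑ u, ∑ v, (F v - F u) * π u v
      = (∑ z, muMeasure G d q y z * F z) - ∑ z, muMeasure G d q x z * F z := by
    have e1 : ∀ u v, (F v - F u) * π u v = F v * π u v - F u * π u v := fun u v => by ring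
    simp_rw [e1, Finset.sum_sub_distrib]
    congr 1
    · rw [Finset.sum_comm]
      refine Finset.sum_congr rfl fun v _ => ?_
      rw [← Finset.mul_sum, mul_comm]
      congr 1
      rw [← tsum_fintype (L := SummationFilter.unconditional _)]; exact hcol v
    · refine Finset.sum_congr rfl fun u _ => ?_
      rw [← Finset.mul_sum, mul_comm]
      congr 1
      rw [← tsum_fintype (L := SummationFilter.unconditional _)]; exact hrow u
  calc q * (F y - F x) + ((1 - q)/d) *
        ((∑ v ∈ G.neighborFinset y, F v) - ∑ u ∈ G.neighborFinset x, F u)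
      = (∑ z, muMeasure G d q y z * F z) - ∑ z, muMeasure G d q x z * F z := by
        rw [mu_mul_sum G d q y F, mu_mul_sum G d q x F]; ring
    _ = ∑ u, ∑ v, (F v - F u) * π u v := step2.symm
    _ ≤ transportCost G π := step1

lemma costSet_nonempty [Fintype V] (G : SimpleGraph V) [G.LocallyFinite] {d : ℕ} (hd : 0 < d)
    (hreg : G.IsRegularOfDegree d) {q : ℝ} (h0 : 0 ≤ q) (h1 : q ≤ 1) (x y : V) :
    {c : ℝ | ∃ π, IsTransportPlan (muMeasure G d q x) (muMeasure G d q y) π ∧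
      transportCost G π = c}.Nonempty :=
  ⟨_, _, prod_plan G hd hreg h0 h1 x y, rfl⟩

lemma mix_plan [Fintype V] (G : SimpleGraph V) [G.LocallyFinite] {d : ℕ} (hd : 0 < d)
    (x y : V) (hxy : G.Adj x y) {p lam : ℝ} (hlam0 : 0 ≤ lam) (hlam1 : lam ≤ 1)
    {π : V → V → ℝ} (hπ : IsTransportPlan (muMeasure G d p x) (muMeasure G d p y) π) :
    IsTransportPlan (muMeasure G d (1 - lam * (1 - p)) x) (muMeasure G d (1 - lam * (1 - p)) y)
      (fun u v => lam * π u v + (1 - lam) * (if u = x ∧ v = y then 1 else 0)) ∧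
    transportCost G (fun u v => lam * π u v + (1 - lam) * (if u = x ∧ v = y then 1 else 0))
      = lam * transportCost G π + (1 - lam) := by
  obtain ⟨hpos, hrow, hcol⟩ := hπ
  set q := 1 - lam * (1 - p) with hq
  have hxyne : x ≠ y := G.ne_of_adj hxy
  constructor
  · refine ⟨fun u v => ?_, fun u => ?_, fun v => ?_⟩
    · dsimp only
      have h2 : (0:ℝ) ≤ if u = x ∧ v = y then 1 else 0 := by split_ifs <;> norm_num
      nlinarith [hpos u v]
    · rw [tsum_fintype]
      have : ∀ v, lam * π u v + (1 - lam) * (if u = x ∧ v = y then 1 else 0)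
          = lam * π u v + ((1 - lam) * if v = y then (if u = x then 1 else 0) else 0) := by
        intro v
        by_cases h1 : u = x <;> by_cases h2 : v = y <;> simp [h1, h2]
      rw [Finset.sum_congr rfl fun v _ => this v, Finset.sum_add_distrib, ← Finset.mul_sum,
        ← Finset.mul_sum, Finset.sum_ite_eq' Finset.univ y
          (fun _ => if u = x then (1:ℝ) else 0), if_pos (Finset.mem_univ y),
        ← tsum_fintype (L := SummationFilter.unconditional _), hrow u]
      by_cases h1 : u = x
      · subst h1
        simp only [muMeasure, if_pos rfl, if_true]
        rw [hq]; ring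
      · simp only [muMeasure, h1, if_false, mul_zero, add_zero]
        by_cases h2 : G.Adj x u <;> simp only [h2, if_true, if_false] <;> [skip; ring]
        rw [hq]; ring
    · rw [tsum_fintype]
      have : ∀ u, lam * π u v + (1 - lam) * (if u = x ∧ v = y then 1 else 0)
          = lam * π u v + ((1 - lam) * if u = x then (if v = y then 1 else 0) else 0) := by
        intro u
        by_cases h1 : u = x <;> by_cases h2 : v = y <;> simp [h1, h2]
      rw [Finset.sum_congr rfl fun u _ => this u, Finset.sum_add_distrib, ← Finset.mul_sum,
        ← Finset.mul_sum, Finset.sum_ite_eq' Finset.univ x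
          (fun _ => if v = y then (1:ℝ) else 0), if_pos (Finset.mem_univ x),
        ← tsum_fintype (L := SummationFilter.unconditional _), hcol v]
      by_cases h2 : v = y
      · subst h2
        simp only [muMeasure, if_pos rfl, if_true]
        rw [hq]; ring
      · simp only [muMeasure, h2, if_false, mul_zero, add_zero]
        by_cases h3 : G.Adj y v <;> simp only [h3, if_true, if_false] <;> [skip; ring]
        rw [hq]; ring
  · rw [transportCost, transportCost, tsum_fintype, tsum_fintype]
    have : ∀ z : V × V, (G.dist z.1 z.2 : ℝ) *
        (lam * π z.1 z.2 + (1 - lam) * (if z.1 = x ∧ z.2 = y then 1 else 0))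
        = lam * ((G.dist z.1 z.2 : ℝ) * π z.1 z.2)
          + (1 - lam) * (if z = (x, y) then (G.dist x y : ℝ) else 0) := by
      rintro ⟨u, v⟩
      by_cases h1 : u = x <;> by_cases h2 : v = y <;>
        simp [h1, h2, Prod.ext_iff] <;> ring
    rw [Finset.sum_congr rfl fun z _ => this z, Finset.sum_add_distrib, ← Finset.mul_sum,
      ← Finset.mul_sum, Finset.sum_ite_eq' Finset.univ (x, y) (fun _ => (G.dist x y : ℝ)),
      if_pos (Finset.mem_univ _), SimpleGraph.dist_eq_one_iff_adj.mpr hxy]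
    norm_num

lemma kappa_div_monotone [Fintype V] (G : SimpleGraph V) [G.LocallyFinite] {d : ℕ} (hd : 0 < d)
    (hreg : G.IsRegularOfDegree d) (x y : V) (hxy : G.Adj x y) :
    MonotoneOn (fun q => kappa G d q x y / (1 - q)) (Set.Ioo (0:ℝ) 1) := by
  rintro p ⟨hp0, hp1⟩ r ⟨hr0, hr1⟩ hpr
  set lam := (1 - r) / (1 - p) with hlam
  have h1p : (0:ℝ) < 1 - p := by linarith
  have h1r : (0:ℝ) < 1 - r := by linarith
  have hlam0 : 0 < lam := div_pos h1r h1p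
  have hlam1 : lam ≤ 1 := by
    rw [hlam, div_le_one h1p]; linarith
  have hr_eq : r = 1 - lam * (1 - p) := by
    rw [hlam]; field_simp
    ring
  -- S_p and S_r
  set Sp := {c : ℝ | ∃ π, IsTransportPlan (muMeasure G d p x) (muMeasure G d p y) π ∧
      transportCost G π = c} with hSp
  set Sr := {c : ℝ | ∃ π, IsTransportPlan (muMeasure G d r x) (muMeasure G d r y) π ∧
      transportCost G π = c} with hSr
  have hkey : ∀ c ∈ Sp, sInf Sr ≤ lam * c + (1 - lam) := by
    rintro c ⟨π, hπ, rfl⟩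
    obtain ⟨hplan, hcost⟩ := mix_plan G hd x y hxy hlam0.le hlam1 hπ
    refine csInf_le (bddBelow_costSet G _ _) ?_
    rw [← hr_eq] at hplan
    exact ⟨_, hplan, hcost⟩
  have hSpne : Sp.Nonempty := costSet_nonempty G hd hreg hp0.le hp1.le x y
  have h2 : (sInf Sr - (1 - lam)) / lam ≤ sInf Sp := by
    refine le_csInf hSpne fun c hc => ?_
    rw [div_le_iff₀ hlam0]
    have := hkey c hc
    nlinarith [hkey c hc]
  have h3 : sInf Sr ≤ lam * sInf Sp + (1 - lam) := by
    rw [div_le_iff₀ hlam0] at h2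
    nlinarith
  -- now convert to kappa
  have hks : kappa G d r x y = 1 - sInf Sr := rfl
  have hkp : kappa G d p x y = 1 - sInf Sp := rfl
  simp only [hks, hkp]
  have hkk : lam * kappa G d p x y ≤ kappa G d r x y := by
    rw [hks, hkp]; nlinarith
  have h1req : 1 - r = lam * (1 - p) := by rw [hr_eq]; ring
  rw [div_le_div_iff₀ h1p h1r]
  calc kappa G d p x y * (1 - r) = (lam * kappa G d p x y) * (1 - p) := by
        rw [h1req]; ring
    _ ≤ kappa G d r x y * (1 - p) := by
        have := hkk
        nlinarith

lemma egervary [Fintype V] (A B : Finset V) (hAB : A.card = B.card)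
    (c : V → V → ℤ) (hc0 : ∀ u ∈ A, ∀ v ∈ B, 0 ≤ c u v) (hc3 : ∀ u ∈ A, ∀ v ∈ B, c u v ≤ 3) :
    ∃ (α β : V → ℤ) (φ : V → V),
      (∀ u ∈ A, ∀ v ∈ B, β v - α u ≤ c u v) ∧
      Set.InjOn φ A ∧ (∀ u ∈ A, φ u ∈ B) ∧
      (∑ v ∈ B, β v) - (∑ u ∈ A, α u) = ∑ u ∈ A, c u (φ u) := by
  -- abbreviations
  set Feas : (V → ℤ) → (V → ℤ) → Prop := fun α β => ∀ u ∈ A, ∀ v ∈ B, β v - α u ≤ c u v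
    with hFeas
  set val : (V → ℤ) → (V → ℤ) → ℤ := fun α β => (∑ v ∈ B, β v) - (∑ u ∈ A, α u) with hval
  -- a reference bijection A → B
  have hbij : ∃ φ₀ : V → V, Set.InjOn φ₀ A ∧ ∀ u ∈ A, φ₀ u ∈ B := by
    have e := Finset.equivOfCardEq hAB
    refine ⟨fun u => if h : u ∈ A then (e ⟨u, h⟩ : V) else u, ?_, ?_⟩
    · intro u1 h1 u2 h2 heq
      simp only [Finset.mem_coe] at h1 h2
      dsimp only at heq
      rw [dif_pos h1, dif_pos h2] at heq
      exact Subtype.ext_iff.mp (e.injective (Subtype.ext heq))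
    · intro u hu
      dsimp only
      rw [dif_pos hu]
      exact (e ⟨u, hu⟩).2
  -- reindexing lemma: sum over B of β equals sum over A of β ∘ φ for a matching φ
  have hreindex : ∀ (β : V → ℤ) (φ : V → V), Set.InjOn φ A → (∀ u ∈ A, φ u ∈ B) →
      ∑ v ∈ B, β v = ∑ u ∈ A, β (φ u) := by
    intro β φ hinj hmaps
    have himg : A.image φ = B := by
      apply Finset.eq_of_subset_of_card_le
      · intro v hv
        obtain ⟨u, hu, rfl⟩ := Finset.mem_image.mp hv
        exact hmaps u hu
      · rw [Finset.card_image_of_injOn hinj, hAB]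
    rw [← himg, Finset.sum_image (fun u hu u' hu' h => hinj hu hu' h)]
  -- weak duality
  have hweak : ∀ α β, Feas α β → ∀ φ : V → V, Set.InjOn φ A → (∀ u ∈ A, φ u ∈ B) →
      val α β ≤ ∑ u ∈ A, c u (φ u) := by
    intro α β hf φ hinj hmaps
    show (∑ v ∈ B, β v) - (∑ u ∈ A, α u) ≤ _
    rw [hreindex β φ hinj hmaps, ← Finset.sum_sub_distrib]
    exact Finset.sum_le_sum fun u hu => hf u hu (φ u) (hmaps u hu)
  have hbound : ∀ α β, Feas α β → val α β ≤ 3 * A.card := by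
    intro α β hf
    obtain ⟨φ₀, hinj, hmaps⟩ := hbij
    calc val α β ≤ ∑ u ∈ A, c u (φ₀ u) := hweak α β hf φ₀ hinj hmaps
      _ ≤ ∑ u ∈ A, 3 := Finset.sum_le_sum fun u hu => hc3 u hu _ (hmaps u hu)
      _ = 3 * A.card := by rw [Finset.sum_const, nsmul_eq_mul]; ring
  -- dichotomy : tight matching or strict improvement
  have dicho : ∀ α β, Feas α β →
      (∃ φ : V → V, Set.InjOn φ A ∧ (∀ u ∈ A, φ u ∈ B) ∧
        (∀ u ∈ A, β (φ u) - α u = c u (φ u))) ∨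
      (∃ α' β', Feas α' β' ∧ val α β + 1 ≤ val α' β') := by
    intro α β hf
    set t : A → Finset V := fun a => B.filter (fun v => β v - α a.1 = c a.1 v) with ht
    by_cases hH : ∀ s : Finset A, s.card ≤ (s.biUnion t).card
    · left
      obtain ⟨f, finj, hft⟩ := (Finset.all_card_le_biUnion_card_iff_existsInjective' t).mp hH
      refine ⟨fun u => if h : u ∈ A then f ⟨u, h⟩ else u, ?_, ?_, ?_⟩
      · intro u1 h1 u2 h2 heq
        simp only [Finset.mem_coe] at h1 h2
        dsimp only at heq
        rw [dif_pos h1, dif_pos h2] at heq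
        exact Subtype.ext_iff.mp (finj heq)
      · intro u hu
        dsimp only
        rw [dif_pos hu]
        exact Finset.mem_of_mem_filter _ (hft ⟨u, hu⟩)
      · intro u hu
        dsimp only
        rw [dif_pos hu]
        have h2 := (Finset.mem_filter.mp (hft ⟨u, hu⟩)).2
        exact h2
    · right
      push_neg at hH
      obtain ⟨s, hs⟩ := hH
      set S : Finset V := s.image (Subtype.val) with hS
      set Γ : Finset V := s.biUnion t with hΓ
      have hScard : S.card = s.card := Finset.card_image_of_injective s Subtype.val_injective
      have hSA : S ⊆ A := by
        intro u hu
        obtain ⟨a, _, rfl⟩ := Finset.mem_image.mp hu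
        exact a.2
      have hΓB : Γ ⊆ B := by
        intro v hv
        obtain ⟨a, _, hv⟩ := Finset.mem_biUnion.mp hv
        exact Finset.mem_of_mem_filter _ hv
      have hΓS : Γ.card < S.card := by rw [hScard]; exact hs
      have hBΓne : (B \ Γ).Nonempty := by
        rw [← Finset.card_pos, Finset.card_sdiff_of_subset hΓB]
        have : Γ.card < B.card := lt_of_lt_of_le hΓS (le_trans (Finset.card_le_card hSA) hAB.le)
        omega
      have hSne : S.Nonempty := Finset.card_pos.mp (lt_of_le_of_lt (Nat.zero_le _) hΓS)
      have hPne : (S ×ˢ (B \ Γ)).Nonempty := hSne.product hBΓne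
      set D : Finset ℤ := (S ×ˢ (B \ Γ)).image (fun pr => c pr.1 pr.2 + α pr.1 - β pr.2)
        with hD
      have hDne : D.Nonempty := hPne.image _
      set δ : ℤ := D.min' hDne with hδ
      have hδ1 : 1 ≤ δ := by
        refine Finset.le_min' _ _ _ fun z hz => ?_
        obtain ⟨⟨u, v⟩, hpr, rfl⟩ := Finset.mem_image.mp hz
        obtain ⟨huS, hvBΓ⟩ := Finset.mem_product.mp hpr
        simp only
        have huA : u ∈ A := hSA huS
        have hvB : v ∈ B := (Finset.mem_sdiff.mp hvBΓ).1
        have hvΓ : v ∉ Γ := (Finset.mem_sdiff.mp hvBΓ).2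
        have hne : β v - α u ≠ c u v := by
          intro heq
          obtain ⟨a, has, rfl⟩ := Finset.mem_image.mp huS
          exact hvΓ (Finset.mem_biUnion.mpr ⟨a, has, Finset.mem_filter.mpr ⟨hvB, heq⟩⟩)
        have hle := hf u huA v hvB
        omega
      have hδle : ∀ u ∈ S, ∀ v ∈ B \ Γ, δ ≤ c u v + α u - β v := by
        intro u hu v hv
        exact Finset.min'_le _ _ (Finset.mem_image.mpr ⟨(u, v), Finset.mem_product.mpr ⟨hu, hv⟩, rfl⟩)
      refine ⟨fun u => if u ∈ S then α u - δ else α u,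
        fun v => if v ∈ Γ then β v - δ else β v, ?_, ?_⟩
      · intro u hu v hv
        by_cases h1 : u ∈ S <;> by_cases h2 : v ∈ Γ <;>
          simp only [h1, h2, if_true, if_false]
        · have := hf u hu v hv; omega
        · have := hδle u h1 v (Finset.mem_sdiff.mpr ⟨hv, h2⟩); omega
        · have := hf u hu v hv; omega
        · exact hf u hu v hv
      · show val α β + 1 ≤ (∑ v ∈ B, (if v ∈ Γ then β v - δ else β v))
            - (∑ u ∈ A, (if u ∈ S then α u - δ else α u))
        have e1 : ∑ v ∈ B, (if v ∈ Γ then β v - δ else β v)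
            = (∑ v ∈ B, β v) - δ * Γ.card := by
          have : ∀ v, (if v ∈ Γ then β v - δ else β v)
              = β v - (if v ∈ Γ then δ else 0) := by
            intro v; split_ifs <;> ring
          rw [Finset.sum_congr rfl fun v _ => this v, Finset.sum_sub_distrib,
            Finset.sum_ite_mem, Finset.inter_eq_right.mpr hΓB, Finset.sum_const,
            nsmul_eq_mul]
          ring
        have e2 : ∑ u ∈ A, (if u ∈ S then α u - δ else α u)
            = (∑ u ∈ A, α u) - δ * S.card := by
          have : ∀ u, (if u ∈ S then α u - δ else α u)
              = α u - (if u ∈ S then δ else 0) := by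
            intro u; split_ifs <;> ring
          rw [Finset.sum_congr rfl fun u _ => this u, Finset.sum_sub_distrib,
            Finset.sum_ite_mem, Finset.inter_eq_right.mpr hSA, Finset.sum_const,
            nsmul_eq_mul]
          ring
        rw [e1, e2]
        show (∑ v ∈ B, β v) - (∑ u ∈ A, α u) + 1 ≤ _
        have hcards : (Γ.card : ℤ) + 1 ≤ S.card := by exact_mod_cast hΓS
        nlinarith [hδ1, hcards]
  -- main induction
  have main : ∀ n : ℕ, ∀ α β : V → ℤ, Feas α β → 3 * (A.card : ℤ) ≤ val α β + n →
      ∃ (α' β' : V → ℤ) (φ : V → V),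
        Feas α' β' ∧ Set.InjOn φ A ∧ (∀ u ∈ A, φ u ∈ B) ∧
        (∀ u ∈ A, β' (φ u) - α' u = c u (φ u)) := by
    intro n
    induction n with
    | zero =>
      intro α β hf hv
      rcases dicho α β hf with ⟨φ, h1, h2, h3⟩ | ⟨α', β', hf', hv'⟩
      · exact ⟨α, β, φ, hf, h1, h2, h3⟩
      · exfalso
        have := hbound α' β' hf'
        simp only [Nat.cast_zero, add_zero] at hv
        omega
    | succ n ih =>
      intro α β hf hv
      rcases dicho α β hf with ⟨φ, h1, h2, h3⟩ | ⟨α', β', hf', hv'⟩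
      · exact ⟨α, β, φ, hf, h1, h2, h3⟩
      · refine ih α' β' hf' ?_
        push_cast at hv ⊢
        omega
  have hfeas0 : Feas (fun _ => 0) (fun _ => 0) := by
    intro u hu v hv
    simpa using hc0 u hu v hv
  obtain ⟨α, β, φ, hf, hinj, hmaps, htight⟩ :=
    main (3 * A.card) (fun _ => 0) (fun _ => 0) hfeas0 (by
      have : val (fun _ => 0) (fun _ => 0) = 0 := by simp [hval]
      push_cast
      omega)
  refine ⟨α, β, φ, hf, hinj, hmaps, ?_⟩
  rw [hreindex β φ hinj hmaps, ← Finset.sum_sub_distrib]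
  exact Finset.sum_congr rfl fun u hu => htight u hu

lemma exists_cert [Fintype V] (G : SimpleGraph V) [G.LocallyFinite] (hconn : G.Connected)
    {d : ℕ} (hreg : G.IsRegularOfDegree d) {x y : V} (hxy : G.Adj x y)
    (hbad : ∀ φ : V → V, Set.InjOn φ (G.neighborFinset x) →
       (∀ u ∈ G.neighborFinset x, φ u ∈ G.neighborFinset y) →
       ¬ ((∑ u ∈ G.neighborFinset x, (G.dist u (φ u) : ℤ)) ≤ (d : ℤ))) :
    ∃ F : V → ℤ, (∀ u v : V, F v - F u ≤ (G.dist u v : ℤ)) ∧ F y - F x = 1 ∧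
      (d : ℤ) ≤ (∑ v ∈ G.neighborFinset y, F v) - (∑ u ∈ G.neighborFinset x, F u) := by
  set A := G.neighborFinset x with hA
  set B := G.neighborFinset y with hB
  have hcardA : A.card = d := by rw [hA, G.card_neighborFinset_eq_degree, hreg x]
  have hcardB : B.card = d := by rw [hB, G.card_neighborFinset_eq_degree, hreg y]
  have hAB : A.card = B.card := by rw [hcardA, hcardB]
  have hyA : y ∈ A := (SimpleGraph.mem_neighborFinset G x y).mpr hxy
  have hxB : x ∈ B := (SimpleGraph.mem_neighborFinset G y x).mpr hxy.symm
  have hAne : A.Nonempty := ⟨y, hyA⟩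
  have hdxy : G.dist x y = 1 := SimpleGraph.dist_eq_one_iff_adj.mpr hxy
  have hdyx : G.dist y x = 1 := SimpleGraph.dist_eq_one_iff_adj.mpr hxy.symm
  have hdux : ∀ u ∈ A, G.dist u x = 1 := fun u hu =>
    SimpleGraph.dist_eq_one_iff_adj.mpr (((SimpleGraph.mem_neighborFinset G x u).mp hu).symm)
  have hdxu : ∀ u ∈ A, G.dist x u = 1 := fun u hu =>
    SimpleGraph.dist_eq_one_iff_adj.mpr ((SimpleGraph.mem_neighborFinset G x u).mp hu)
  have hdyv : ∀ v ∈ B, G.dist y v = 1 := fun v hv =>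
    SimpleGraph.dist_eq_one_iff_adj.mpr ((SimpleGraph.mem_neighborFinset G y v).mp hv)
  have hdvy : ∀ v ∈ B, G.dist v y = 1 := fun v hv =>
    SimpleGraph.dist_eq_one_iff_adj.mpr (((SimpleGraph.mem_neighborFinset G y v).mp hv).symm)
  have htri : ∀ u v w : V, (G.dist u w : ℤ) ≤ G.dist u v + G.dist v w := by
    intro u v w; exact_mod_cast hconn.dist_triangle
  -- costs are between 0 and 3
  have hc0 : ∀ u ∈ A, ∀ v ∈ B, (0:ℤ) ≤ G.dist u v := fun u _ v _ => Int.natCast_nonneg _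
  have hc3 : ∀ u ∈ A, ∀ v ∈ B, (G.dist u v : ℤ) ≤ 3 := by
    intro u hu v hv
    calc (G.dist u v : ℤ) ≤ G.dist u x + G.dist x v := htri u x v
      _ ≤ G.dist u x + (G.dist x y + G.dist y v) := by
          have := htri x y v; omega
      _ = 3 := by rw [hdux u hu, hdxy, hdyv v hv]; norm_num
  obtain ⟨α, β, φ, hfeas, hinj, hmaps, hvaleq⟩ :=
    egervary A B hAB (fun u v => (G.dist u v : ℤ)) hc0 hc3
  have hval : (d : ℤ) + 1 ≤ (∑ v ∈ B, β v) - (∑ u ∈ A, α u) := by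
    rw [hvaleq]
    have := hbad φ hinj hmaps
    omega
  -- the envelope
  set f : V → ℤ := fun w => A.inf' hAne (fun u => α u + (G.dist u w : ℤ)) with hf
  have hflip : ∀ u v : V, f v - f u ≤ (G.dist u v : ℤ) := by
    intro u v
    obtain ⟨u0, hu0, hval0⟩ := A.exists_mem_eq_inf' hAne (fun z => α z + (G.dist z u : ℤ))
    have h3 : f u = α u0 + (G.dist u0 u : ℤ) := hval0
    have h1 : f v ≤ α u0 + (G.dist u0 v : ℤ) := Finset.inf'_le _ hu0
    have h2 : (G.dist u0 v : ℤ) ≤ (G.dist u0 u : ℤ) + (G.dist u v : ℤ) := htri u0 u v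
    omega
  have hfA : ∀ u ∈ A, f u ≤ α u := by
    intro u hu
    have h1 : f u ≤ α u + (G.dist u u : ℤ) := Finset.inf'_le _ hu
    rw [SimpleGraph.dist_self] at h1
    simpa using h1
  have hfB : ∀ v ∈ B, β v ≤ f v := by
    intro v hv
    refine Finset.le_inf' hAne _ fun u hu => ?_
    have := hfeas u hu v hv
    omega
  have hSf : (d : ℤ) + 1 ≤ (∑ v ∈ B, f v) - (∑ u ∈ A, f u) := by
    have h1 : (∑ v ∈ B, β v) ≤ ∑ v ∈ B, f v := Finset.sum_le_sum hfB
    have h2 : (∑ u ∈ A, f u) ≤ ∑ u ∈ A, α u := Finset.sum_le_sum hfA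
    omega
  -- Δ bounds
  have hΔle : f y - f x ≤ 1 := by have := hflip x y; rw [hdxy] at this; omega
  have hΔge : -1 ≤ f y - f x := by have := hflip y x; rw [hdyx] at this; omega
  -- exclusion of Δ = -1
  have hΔ0 : 0 ≤ f y - f x := by
    by_contra hneg
    push_neg at hneg
    have hΔ : f y = f x - 1 := by omega
    have h1 : ∑ v ∈ B, f v ≤ ∑ v ∈ B, (f y + 1) := by
      refine Finset.sum_le_sum fun v hv => ?_
      have := hflip y v
      rw [hdyv v hv] at this
      omega
    have h2 : ∑ u ∈ A, (f x - 1) ≤ ∑ u ∈ A, f u := by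
      refine Finset.sum_le_sum fun u hu => ?_
      have := hflip u x
      rw [hdux u hu] at this
      omega
    rw [Finset.sum_const, hcardB] at h1
    rw [Finset.sum_const, hcardA] at h2
    simp only [nsmul_eq_mul] at h1 h2
    have hce : (∑ v ∈ B, f v) - (∑ u ∈ A, f u) ≤ (d:ℤ) := by
      have hx1 : (d:ℤ) * (f y + 1) - (d:ℤ) * (f x - 1) = (d:ℤ) := by rw [hΔ]; ring
      linarith [h1, h2, hx1]
    omega
  -- the massaged certificate
  set F : V → ℤ := fun w => max (f w) (f x + 1 - (G.dist w y : ℤ)) with hFdef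
  have hFlip : ∀ u v : V, F v - F u ≤ (G.dist u v : ℤ) := by
    intro u v
    have h1 : f v ≤ f u + (G.dist u v : ℤ) := by have := hflip u v; omega
    have h2 : f x + 1 - (G.dist v y : ℤ) ≤ (f x + 1 - (G.dist u y : ℤ)) + (G.dist u v : ℤ) := by
      have := htri u v y
      omega
    have h3 : F v ≤ max (f u + (G.dist u v : ℤ)) ((f x + 1 - (G.dist u y : ℤ)) + (G.dist u v : ℤ)) :=
      max_le_max h1 h2
    rw [max_add_add_right] at h3
    have h4 : F u = max (f u) (f x + 1 - (G.dist u y : ℤ)) := rfl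
    omega
  have hFy : F y = f x + 1 := by
    show max (f y) (f x + 1 - (G.dist y y : ℤ)) = f x + 1
    rw [SimpleGraph.dist_self]
    push_cast
    rw [sub_zero]
    exact max_eq_right (by omega)
  have hFx : F x = f x := by
    show max (f x) (f x + 1 - (G.dist x y : ℤ)) = f x
    rw [hdxy]
    push_cast
    norm_num
  have hFge : ∀ w, f w ≤ F w := fun w => le_max_left _ _
  have hAeq : ∀ w ∈ A, w ∉ B → w ≠ y → F w = f w := by
    intro w hwA hwB hwy
    show max (f w) (f x + 1 - (G.dist w y : ℤ)) = f w
    have h2 : 2 ≤ G.dist w y := by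
      have h0 : G.dist w y ≠ 0 := by
        intro hz
        exact hwy ((hconn.dist_eq_zero_iff).mp hz)
      have h1 : G.dist w y ≠ 1 := by
        intro ho
        have : G.Adj w y := SimpleGraph.dist_eq_one_iff_adj.mp ho
        exact hwB ((SimpleGraph.mem_neighborFinset G y w).mpr this.symm)
      omega
    have h3 : f x - f w ≤ 1 := by have := hflip w x; rw [hdux w hwA] at this; omega
    apply max_eq_left
    omega
  have hsplitA : ∑ u ∈ A, (F u - f u) = (∑ u ∈ A ∩ B, (F u - f u)) + ∑ u ∈ A \ B, (F u - f u) :=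
    (Finset.sum_inter_add_sum_sdiff A B _).symm
  have hdiffA : ∑ u ∈ A \ B, (F u - f u) = F y - f y := by
    apply Finset.sum_eq_single_of_mem y
    · exact Finset.mem_sdiff.mpr
        ⟨hyA, fun hyB => G.irrefl ((SimpleGraph.mem_neighborFinset G y y).mp hyB)⟩
    · intro w hw hwy
      obtain ⟨hwA, hwB⟩ := Finset.mem_sdiff.mp hw
      rw [hAeq w hwA hwB hwy, sub_self]
  have hBsum : ∑ u ∈ A ∩ B, (F u - f u) ≤ ∑ v ∈ B, (F v - f v) := by
    apply Finset.sum_le_sum_of_subset_of_nonneg Finset.inter_subset_right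
    intro v _ _
    have := hFge v; omega
  refine ⟨F, hFlip, by rw [hFy, hFx]; ring, ?_⟩
  have e1 : (∑ v ∈ B, F v) - (∑ u ∈ A, F u)
      = ((∑ v ∈ B, f v) - (∑ u ∈ A, f u)) + ((∑ v ∈ B, (F v - f v)) - ∑ u ∈ A, (F u - f u)) := by
    rw [Finset.sum_sub_distrib, Finset.sum_sub_distrib]
    ring
  have e2 : F y - f y = 1 - (f y - f x) := by rw [hFy]; ring
  omega

lemma finite_case [Fintype V] (G : SimpleGraph V) [G.LocallyFinite] (hconn : G.Connected)
    (d : ℕ) (hreg : G.IsRegularOfDegree d) (x y : V) (hxy : G.Adj x y)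
    (h : 0 < kappaLLY G d x y) : 0 ≤ kappa G d 0 x y := by
  set A := G.neighborFinset x with hA
  set B := G.neighborFinset y with hB
  have hyA : y ∈ A := (SimpleGraph.mem_neighborFinset G x y).mpr hxy
  have hd : 0 < d := by
    have h2 := Finset.card_pos.mpr ⟨y, hyA⟩
    rwa [hA, G.card_neighborFinset_eq_degree, hreg x] at h2
  have hdR : (0:ℝ) < d := by exact_mod_cast hd
  by_cases hgood : ∃ φ : V → V, Set.InjOn φ A ∧ (∀ u ∈ A, φ u ∈ B) ∧
      (∑ u ∈ A, (G.dist u (φ u) : ℤ)) ≤ (d:ℤ)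
  · -- a cheap matching exists : build a plan of cost ≤ 1
    obtain ⟨φ, hinj, hmaps, hcost⟩ := hgood
    set π : V → V → ℝ := fun u v => if u ∈ A ∧ v = φ u then (1:ℝ)/d else 0 with hπ
    have hplan : IsTransportPlan (muMeasure G d 0 x) (muMeasure G d 0 y) π := by
      have hxA : x ∉ A := by simp [hA]
      have hyB : y ∉ B := by simp [hB]
      refine ⟨fun u v => by
        show (0:ℝ) ≤ if u ∈ A ∧ v = φ u then (1:ℝ)/d else 0
        split_ifs <;> positivity, fun u => ?_, fun v => ?_⟩
      · rw [tsum_fintype]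
        have e : ∀ v, π u v = if v = φ u then (if u ∈ A then (1:ℝ)/d else 0) else 0 := by
          intro v
          by_cases h1 : u ∈ A <;> by_cases h2 : v = φ u <;> simp [hπ, h1, h2]
        rw [Finset.sum_congr rfl fun v _ => e v,
          Finset.sum_ite_eq' Finset.univ (φ u) (fun _ => if u ∈ A then (1:ℝ)/d else 0),
          if_pos (Finset.mem_univ _)]
        by_cases h1 : u ∈ A
        · have hadj : G.Adj x u := (SimpleGraph.mem_neighborFinset G x u).mp h1
          have hune : u ≠ x := fun hh => G.irrefl (hh ▸ hadj)
          simp [muMeasure, h1, hune, hadj]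
        · by_cases h2 : u = x
          · subst h2
            simp [muMeasure, h1]
          · have h3 : ¬ G.Adj x u := fun hadj =>
              h1 ((SimpleGraph.mem_neighborFinset G x u).mpr hadj)
            simp [muMeasure, h1, h2, h3]
      · rw [tsum_fintype]
        have e : ∑ u, π u v = ∑ u ∈ Finset.univ.filter (fun u => u ∈ A ∧ v = φ u), (1:ℝ)/d := by
          rw [Finset.sum_filter]
        have efilter : Finset.univ.filter (fun u => u ∈ A ∧ v = φ u)
            = A.filter (fun u => φ u = v) := by
          ext u
          simp [Finset.mem_filter, eq_comm, and_comm]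
        rw [e, efilter, Finset.sum_const, nsmul_eq_mul]
        have hcard : (A.filter (fun u => φ u = v)).card = if v ∈ B then 1 else 0 := by
          by_cases hv : v ∈ B
          · rw [if_pos hv]
            have himg : A.image φ = B := by
              apply Finset.eq_of_subset_of_card_le
              · intro w hw
                obtain ⟨u, hu, rfl⟩ := Finset.mem_image.mp hw
                exact hmaps u hu
              · rw [Finset.card_image_of_injOn hinj, hA, hB,
                  G.card_neighborFinset_eq_degree, G.card_neighborFinset_eq_degree,
                  hreg x, hreg y]
            obtain ⟨u, hu, huv⟩ := Finset.mem_image.mp (himg ▸ hv)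
            rw [Finset.card_eq_one]
            refine ⟨u, ?_⟩
            ext w
            simp only [Finset.mem_filter, Finset.mem_singleton]
            constructor
            · rintro ⟨hwA, hwv⟩
              exact hinj hwA hu (by rw [hwv, huv])
            · rintro rfl
              exact ⟨hu, huv⟩
          · rw [if_neg hv, Finset.card_eq_zero]
            ext u
            simp only [Finset.mem_filter, Finset.notMem_empty, iff_false]
            rintro ⟨huA, rfl⟩
            exact hv (hmaps u huA)
        rw [hcard]
        by_cases hv : v ∈ B
        · have hadj : G.Adj y v := (SimpleGraph.mem_neighborFinset G y v).mp hv
          have hvne : v ≠ y := fun hh => G.irrefl (hh ▸ hadj)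
          simp [muMeasure, hv, hvne, hadj]
        · by_cases h2 : v = y
          · subst h2
            simp [muMeasure, hv]
          · have h3 : ¬ G.Adj y v := fun hadj =>
              hv ((SimpleGraph.mem_neighborFinset G y v).mpr hadj)
            simp [muMeasure, hv, h2, h3]
    have hcost1 : transportCost G π ≤ 1 := by
      rw [transportCost, tsum_fintype, ← Finset.univ_product_univ, Finset.sum_product]
      have e : ∀ u, ∑ v, (G.dist u v : ℝ) * π u v
          = if u ∈ A then (G.dist u (φ u) : ℝ) * ((1:ℝ)/d) else 0 := by
        intro u
        have e2 : ∀ v, (G.dist u v : ℝ) * π u v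
            = if v = φ u then (if u ∈ A then (G.dist u v : ℝ) * ((1:ℝ)/d) else 0) else 0 := by
          intro v
          by_cases h1 : u ∈ A <;> by_cases h2 : v = φ u <;> simp [hπ, h1, h2]
        rw [Finset.sum_congr rfl fun v _ => e2 v,
          Finset.sum_ite_eq' Finset.univ (φ u) _, if_pos (Finset.mem_univ _)]
      rw [Finset.sum_congr rfl fun u _ => e u, Finset.sum_ite_mem, Finset.univ_inter]
      have hsum : ∑ u ∈ A, (G.dist u (φ u) : ℝ) ≤ (d:ℝ) := by
        have : ((∑ u ∈ A, (G.dist u (φ u) : ℤ) : ℤ) : ℝ) ≤ ((d:ℤ):ℝ) := by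
          exact_mod_cast hcost
        push_cast at this
        exact_mod_cast this
      calc ∑ u ∈ A, (G.dist u (φ u) : ℝ) * ((1:ℝ)/d)
          = (∑ u ∈ A, (G.dist u (φ u) : ℝ)) * ((1:ℝ)/d) := by rw [Finset.sum_mul]
        _ ≤ (d:ℝ) * ((1:ℝ)/d) := by
            apply mul_le_mul_of_nonneg_right hsum
            positivity
        _ = 1 := by field_simp
    have hW : W1 G (muMeasure G d 0 x) (muMeasure G d 0 y) ≤ 1 := by
      have hmem : transportCost G π ∈ {c : ℝ | ∃ π', IsTransportPlan (muMeasure G d 0 x)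
          (muMeasure G d 0 y) π' ∧ transportCost G π' = c} := ⟨π, hplan, rfl⟩
      exact le_trans (csInf_le (bddBelow_costSet G _ _) hmem) hcost1
    have : kappa G d 0 x y = 1 - W1 G (muMeasure G d 0 x) (muMeasure G d 0 y) := rfl
    rw [this]
    linarith
  · -- no cheap matching : get a certificate and contradict positivity of the LLY curvature
    exfalso
    have hbad : ∀ φ : V → V, Set.InjOn φ A → (∀ u ∈ A, φ u ∈ B) →
        ¬ ((∑ u ∈ A, (G.dist u (φ u) : ℤ)) ≤ (d : ℤ)) := by
      intro φ h1 h2 h3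
      exact hgood ⟨φ, h1, h2, h3⟩
    obtain ⟨F, hFlip, hgap, hSF⟩ := exists_cert G hconn hreg hxy hbad
    have hFrLip : ∀ u v : V, (F v : ℝ) - (F u : ℝ) ≤ (G.dist u v : ℝ) := by
      intro u v
      exact_mod_cast hFlip u v
    have hκ : ∀ q : ℝ, 0 ≤ q → q < 1 → kappa G d q x y ≤ 0 := by
      intro q hq0 hq1
      have hW : (1:ℝ) ≤ W1 G (muMeasure G d q x) (muMeasure G d q y) := by
        refine le_csInf (costSet_nonempty G hd hreg hq0 hq1.le x y) ?_
        rintro c ⟨π, hπ, rfl⟩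
        have hwd := weak_duality G hd q x y (fun w => (F w : ℝ)) hFrLip hπ
        have hgapR : (F y : ℝ) - (F x : ℝ) = 1 := by exact_mod_cast hgap
        have hSFR : (d:ℝ) ≤ (∑ v ∈ B, (F v : ℝ)) - ∑ u ∈ A, (F u : ℝ) := by
          exact_mod_cast hSF
        have hfrac : (1 - q) ≤ ((1 - q)/d) * ((∑ v ∈ B, (F v:ℝ)) - ∑ u ∈ A, (F u:ℝ)) := by
          have h1q : (0:ℝ) ≤ (1-q)/d := by
            apply div_nonneg _ hdR.le
            linarith
          calc (1 - q) = ((1 - q)/d) * (d:ℝ) := by field_simp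
            _ ≤ ((1 - q)/d) * ((∑ v ∈ B, (F v:ℝ)) - ∑ u ∈ A, (F u:ℝ)) :=
                mul_le_mul_of_nonneg_left hSFR h1q
        have : (1:ℝ) ≤ transportCost G π := by
          rw [hgapR] at hwd
          rw [hA, hB] at *
          linarith
        exact this
      have : kappa G d q x y = 1 - W1 G (muMeasure G d q x) (muMeasure G d q y) := rfl
      rw [this]
      linarith
    -- the modified function and its monotone limit
    set g : ℝ → ℝ := fun q => kappa G d q x y / (1 - q) with hg
    set gt : ℝ → ℝ := fun q => g (max q (1/2)) with hgt
    have hmem : ∀ q : ℝ, q < 1 → max q (1/2) ∈ Set.Ioo (0:ℝ) 1 := by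
      intro q hq
      constructor
      · calc (0:ℝ) < 1/2 := by norm_num
          _ ≤ max q (1/2) := le_max_right _ _
      · exact max_lt hq (by norm_num)
    have hmono : MonotoneOn gt (Set.Iio (1:ℝ)) := by
      intro a ha b hb hab
      exact kappa_div_monotone G hd hreg x y hxy (hmem a ha) (hmem b hb)
        (max_le_max hab le_rfl)
    have hbdd : BddAbove (gt '' Set.Iio (1:ℝ)) := by
      refine ⟨0, ?_⟩
      rintro _ ⟨a, ha, rfl⟩
      have hmema := hmem a ha
      have hka := hκ (max a (1/2)) (le_of_lt hmema.1) hmema.2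
      have h1m : (0:ℝ) ≤ 1 - max a (1/2) := by
        have := hmema.2
        linarith
      exact div_nonpos_iff.mpr (Or.inr ⟨hka, h1m⟩)
    have htt : Tendsto gt (nhdsWithin 1 (Set.Iio (1:ℝ))) (nhds (sSup (gt '' Set.Iio 1))) :=
      hmono.tendsto_nhdsLT hbdd
    have hLle : sSup (gt '' Set.Iio (1:ℝ)) ≤ 0 := by
      apply Real.sSup_nonpos
      rintro _ ⟨a, ha, rfl⟩
      have hmema := hmem a ha
      have hka := hκ (max a (1/2)) (le_of_lt hmema.1) hmema.2
      have h1m : (0:ℝ) ≤ 1 - max a (1/2) := by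
        have := hmema.2
        linarith
      exact div_nonpos_iff.mpr (Or.inr ⟨hka, h1m⟩)
    have heq : gt =ᶠ[nhdsWithin 1 (Set.Iio (1:ℝ))] g := by
      have hIoo : Set.Ioo (1/2 : ℝ) 1 ∈ nhdsWithin 1 (Set.Iio (1:ℝ)) :=
        Ioo_mem_nhdsLT_of_mem (by constructor <;> norm_num)
      refine Filter.eventuallyEq_of_mem hIoo fun q hq => ?_
      have : max q (1/2) = q := max_eq_left hq.1.le
      simp only [hgt, this]
    have htg : Tendsto g (nhdsWithin 1 (Set.Iio (1:ℝ))) (nhds (sSup (gt '' Set.Iio 1))) :=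
      htt.congr' heq
    have hLLY : kappaLLY G d x y = sSup (gt '' Set.Iio 1) := by
      have : kappaLLY G d x y = limUnder (nhdsWithin 1 (Set.Iio (1:ℝ))) g := rfl
      rw [this]
      exact htg.limUnder_eq
    rw [hLLY] at h
    linarith

end StmtZeroAux

/-- In a simple, connected, `d`-regular graph, `κ_LLY(x,y) > 0` implies
`κ₀(x,y) ≥ 0` for every edge `{x,y}`. -/
theorem stmt_0 (G : SimpleGraph V) [G.LocallyFinite] (hconn : G.Connected)
    (d : ℕ) (hreg : G.IsRegularOfDegree d) (x y : V) (hxy : G.Adj x y)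
    (h : 0 < kappaLLY G d x y) : 0 ≤ kappa G d 0 x y := by
  cases finite_or_infinite V with
  | inl hfin =>
    haveI := Fintype.ofFinite V
    exact StmtZeroAux.finite_case G hconn d hreg x y hxy h
  | inr hinf => exact StmtZeroAux.infinite_case G hconn d hreg x y hxy hinf
end

section
/- Let G=(V,E) be a simple, connected, d-regular graph. If a vertex x∈V is Ricci flat, then κ₀(x,y) ≥ 0 for every edge {x,y}∈E. -/
open Filter
open scoped Classical

variable {V : Type*}

/-- The closed ball of radius 1 around `x`. -/
def closedBall1 (G : SimpleGraph V) (x : V) : Set V := insert x (G.neighborSet x)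

/-- The maps `η_i : B₁(x) → V`, `1 ≤ i ≤ d`, witness Ricci flatness at `x`:
(i) `η_i(u) ∼ u` for all `u ∈ B₁(x)`; (ii) `η_i(u) ≠ η_j(u)` for `i ≠ j`;
(iii) `⋃_j η_j(η_i(x)) = ⋃_j η_i(η_j(x))` for all `i`. -/
def IsRicciFlatMaps (G : SimpleGraph V) (d : ℕ) (x : V) (η : Fin d → V → V) : Prop :=
  (∀ i, ∀ u ∈ closedBall1 G x, G.Adj u (η i u)) ∧
  (∀ i j, i ≠ j → ∀ u ∈ closedBall1 G x, η i u ≠ η j u) ∧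
  (∀ i, Set.range (fun j => η j (η i x)) = Set.range (fun j => η i (η j x)))

/-- `x` is Ricci flat. -/
def RicciFlatAt (G : SimpleGraph V) (d : ℕ) (x : V) : Prop :=
  ∃ η : Fin d → V → V, IsRicciFlatMaps G d x η

/-- `x` is (R)-Ricci flat: in addition `η_i(η_i(x)) = x` for all `i`. -/
def RRicciFlatAt (G : SimpleGraph V) (d : ℕ) (x : V) : Prop :=
  ∃ η : Fin d → V → V, IsRicciFlatMaps G d x η ∧ ∀ i, η i (η i x) = x

/-- `x` is (S)-Ricci flat: in addition `η_j(η_i(x)) = η_i(η_j(x))` for all `i, j`. -/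
def SRicciFlatAt (G : SimpleGraph V) (d : ℕ) (x : V) : Prop :=
  ∃ η : Fin d → V → V, IsRicciFlatMaps G d x η ∧ ∀ i j, η j (η i x) = η i (η j x)

/-- `x` is (RS)-Ricci flat: both additional conditions hold simultaneously. -/
def RSRicciFlatAt (G : SimpleGraph V) (d : ℕ) (x : V) : Prop :=
  ∃ η : Fin d → V → V, IsRicciFlatMaps G d x η ∧ (∀ i, η i (η i x) = x) ∧
    (∀ i j, η j (η i x) = η i (η j x))

/-- In a simple, connected, `d`-regular graph, if `x` is Ricci flat then
`κ₀(x,y) ≥ 0` for every edge `{x,y}`. -/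
theorem stmt_2 (G : SimpleGraph V) [G.LocallyFinite] (hconn : G.Connected)
    (d : ℕ) (hreg : G.IsRegularOfDegree d) (x : V) (hx : RicciFlatAt G d x) :
    ∀ y : V, G.Adj x y → 0 ≤ kappa G d 0 x y := by
  intro y hxy
  obtain ⟨η, h1, h2, h3⟩ := hx
  have hxB : x ∈ closedBall1 G x := Set.mem_insert _ _
  have hyB : y ∈ closedBall1 G x := Set.mem_insert_of_mem _ hxy
  have hyn : y ∈ G.neighborFinset x := by
    simpa [SimpleGraph.mem_neighborFinset] using hxy
  have hcardx : (G.neighborFinset x).card = d := hreg x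
  have hcardy : (G.neighborFinset y).card = d := hreg y
  have hdpos : 0 < d := by
    have := Finset.card_pos.mpr ⟨y, hyn⟩
    omega
  have hdR : (d : ℝ) ≠ 0 := Nat.cast_ne_zero.mpr hdpos.ne'
  -- the neighbors of x are exactly the η j x, injectively
  have hinjx : Function.Injective (fun j : Fin d => η j x) := by
    intro i j hij
    by_contra hne
    exact h2 i j hne x hxB hij
  have himx : Finset.univ.image (fun j : Fin d => η j x) = G.neighborFinset x := by
    apply Finset.eq_of_subset_of_card_le
    · intro v hv
      simp only [Finset.mem_image] at hv
      obtain ⟨j, -, rfl⟩ := hv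
      simpa [SimpleGraph.mem_neighborFinset] using h1 j x hxB
    · rw [Finset.card_image_of_injective _ hinjx, Finset.card_univ, Fintype.card_fin, hcardx]
  obtain ⟨k, -, hk⟩ : ∃ k ∈ Finset.univ, η k x = y := by
    have := himx ▸ hyn
    simpa [Finset.mem_image] using this
  have hinjy : Function.Injective (fun j : Fin d => η j y) := by
    intro i j hij
    by_contra hne
    exact h2 i j hne y hyB hij
  have himy : Finset.univ.image (fun j : Fin d => η j y) = G.neighborFinset y := by
    apply Finset.eq_of_subset_of_card_le
    · intro v hv
      simp only [Finset.mem_image] at hv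
      obtain ⟨j, -, rfl⟩ := hv
      simpa [SimpleGraph.mem_neighborFinset] using h1 j y hyB
    · rw [Finset.card_image_of_injective _ hinjy, Finset.card_univ, Fintype.card_fin, hcardy]
  set f : Fin d → V := fun j => η k (η j x) with hf
  have him_f : Finset.univ.image f = G.neighborFinset y := by
    have hr := h3 k
    rw [hk] at hr
    apply Finset.coe_injective
    rw [Finset.coe_image, Finset.coe_univ, Set.image_univ, ← hr]
    rw [← himy, Finset.coe_image, Finset.coe_univ, Set.image_univ]
  have hinjf : Function.Injective f := by
    have hc : (Finset.univ.image f).card = (Finset.univ : Finset (Fin d)).card := by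
      rw [him_f, hcardy, Finset.card_univ, Fintype.card_fin]
    have := Finset.injOn_of_card_image_eq hc
    intro a b hab
    exact this (by simp) (by simp) hab
  -- the transport plan
  set π : V → V → ℝ := fun u v => if G.Adj x u ∧ v = η k u then 1/(d:ℝ) else 0 with hπ
  have hπnn : ∀ u v, 0 ≤ π u v := by
    intro u v
    simp only [hπ]
    split <;> positivity
  have hrow : ∀ u, ∑' v, π u v = muMeasure G d 0 x u := by
    intro u
    by_cases hu : G.Adj x u
    · have h1' : ∀ v, π u v = if v = η k u then 1/(d:ℝ) else 0 := by
        intro v; simp [hπ, hu]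
      rw [tsum_congr h1', tsum_ite_eq]
      have hux : u ≠ x := (G.ne_of_adj hu).symm
      simp [muMeasure, hux, hu]
    · have h1' : ∀ v, π u v = 0 := by intro v; simp [hπ, hu]
      rw [tsum_congr h1', tsum_zero]
      by_cases hux : u = x <;> simp [muMeasure, hux, hu]
  have hcol : ∀ v, ∑' u, π u v = muMeasure G d 0 y v := by
    intro v
    have hsup : ∀ u ∉ G.neighborFinset x, π u v = 0 := by
      intro u hu
      have : ¬ G.Adj x u := by simpa [SimpleGraph.mem_neighborFinset] using hu
      simp [hπ, this]
    rw [tsum_eq_sum hsup, ← himx, Finset.sum_image (fun a _ b _ h => hinjx h)]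
    have hterm : ∀ j : Fin d, π (η j x) v = if v = f j then 1/(d:ℝ) else 0 := by
      intro j
      have : G.Adj x (η j x) := h1 j x hxB
      simp [hπ, this, hf]
    rw [Finset.sum_congr rfl (fun j _ => hterm j)]
    have hvy : v ≠ y → True := fun _ => trivial
    by_cases hv : G.Adj y v
    · have hvmem : v ∈ Finset.univ.image f := him_f ▸ (by simpa [SimpleGraph.mem_neighborFinset] using hv)
      obtain ⟨j₀, -, hj₀⟩ : ∃ j₀ ∈ Finset.univ, f j₀ = v := by
        simpa [Finset.mem_image] using hvmem
      rw [Finset.sum_eq_single j₀]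
      · have hvney : v ≠ y := fun h => (G.ne_of_adj hv) h.symm
        simp [muMeasure, hvney, hv, hj₀]
      · intro b _ hb
        have : v ≠ f b := fun h => hb (hinjf (by rw [← h]; exact hj₀.symm))
        simp [this]
      · intro h; exact absurd (Finset.mem_univ j₀) h
    · have : ∀ j : Fin d, v ≠ f j := by
        intro j hj
        apply hv
        have : f j ∈ G.neighborFinset y := him_f ▸ Finset.mem_image_of_mem f (Finset.mem_univ j)
        rw [← hj] at this
        simpa [SimpleGraph.mem_neighborFinset] using this
      rw [Finset.sum_eq_zero fun j _ => if_neg (this j)]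
      by_cases hvy : v = y <;> simp [muMeasure, hvy, hv]
  have hplan : IsTransportPlan (muMeasure G d 0 x) (muMeasure G d 0 y) π :=
    ⟨hπnn, hrow, hcol⟩
  -- the cost is 1
  have hcost : transportCost G π = 1 := by
    set T : Finset (V × V) := (G.neighborFinset x).image (fun u => (u, η k u)) with hT
    have hsup : ∀ q ∉ T, (G.dist q.1 q.2 : ℝ) * π q.1 q.2 = 0 := by
      intro q hq
      by_cases hπq : G.Adj x q.1 ∧ q.2 = η k q.1
      · exfalso
        apply hq
        rw [hT, Finset.mem_image]
        exact ⟨q.1, by simpa [SimpleGraph.mem_neighborFinset] using hπq.1,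
          by rw [← hπq.2]⟩
      · simp [hπ, hπq]
    rw [transportCost, tsum_eq_sum hsup, hT,
      Finset.sum_image (fun a _ b _ h => congrArg Prod.fst h)]
    have hterm : ∀ u ∈ G.neighborFinset x, (G.dist u (η k u) : ℝ) * π u (η k u) = 1/(d:ℝ) := by
      intro u hu
      have hadjxu : G.Adj x u := by simpa [SimpleGraph.mem_neighborFinset] using hu
      have hadj : G.Adj u (η k u) := h1 k u (Set.mem_insert_of_mem _ hadjxu)
      have hdist : G.dist u (η k u) = 1 := SimpleGraph.dist_eq_one_iff_adj.mpr hadj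
      simp [hπ, hadjxu, hdist]
    rw [Finset.sum_congr rfl hterm, Finset.sum_const, hcardx]
    rw [nsmul_eq_mul]
    field_simp
  -- conclude
  have hbdd : BddBelow {c : ℝ | ∃ π', IsTransportPlan (muMeasure G d 0 x) (muMeasure G d 0 y) π' ∧ transportCost G π' = c} := by
    refine ⟨0, fun c hc => ?_⟩
    obtain ⟨π', hπ', rfl⟩ := hc
    exact tsum_nonneg fun q => mul_nonneg (Nat.cast_nonneg _) (hπ'.1 _ _)
  have hmem : (1:ℝ) ∈ {c : ℝ | ∃ π', IsTransportPlan (muMeasure G d 0 x) (muMeasure G d 0 y) π' ∧ transportCost G π' = c} :=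
    ⟨π, hplan, hcost⟩
  have hW1 : W1 G (muMeasure G d 0 x) (muMeasure G d 0 y) ≤ 1 := csInf_le hbdd hmem
  rw [kappa]
  linarith
end

section
/- Let G=(V,E) be a simple, connected, d-regular graph. If a vertex x∈V is Ricci flat, then Γ₂(f)(x) ≥ 0 for every function f:V→ℝ; in particular, the Bakry–Émery curvature satisfies K_∞(x) ≥ 0. -/
open Filter
open scoped Classical

variable {V : Type*}

/-- The (non-normalized) graph Laplacian `Δf(x) = ∑_{y ∼ x} (f(y) - f(x))`. -/
noncomputable def graphLap (G : SimpleGraph V) [G.LocallyFinite] (f : V → ℝ) (x : V) : ℝ :=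
  ∑ y ∈ G.neighborFinset x, (f y - f x)

/-- The operator `Γ`: `2Γ(f,g) = Δ(fg) - fΔg - gΔf`. -/
noncomputable def gammaOp (G : SimpleGraph V) [G.LocallyFinite] (f g : V → ℝ) (x : V) : ℝ :=
  (graphLap G (fun z => f z * g z) x - f x * graphLap G g x - g x * graphLap G f x) / 2

/-- The operator `Γ₂`: `2Γ₂(f) = ΔΓ(f) - 2Γ(f, Δf)`, where `Γ(f) = Γ(f,f)`. -/
noncomputable def gamma2Op (G : SimpleGraph V) [G.LocallyFinite] (f : V → ℝ) (x : V) : ℝ :=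
  (graphLap G (fun z => gammaOp G f f z) x - 2 * gammaOp G f (graphLap G f) x) / 2

/-- The set of lower Bakry–Émery curvature bounds at `x`: all `K` such that
`Γ₂(f)(x) ≥ K·Γ(f)(x)` for every `f : V → ℝ`.  The Bakry–Émery curvature `K_∞(x)` is the
largest element of this set. -/
def curvBounds (G : SimpleGraph V) [G.LocallyFinite] (x : V) : Set ℝ :=
  {K : ℝ | ∀ f : V → ℝ, K * gammaOp G f f x ≤ gamma2Op G f x}

lemma key_identity (d : ℕ) (a : Fin d → ℝ) (g : Fin d → Fin d → ℝ)
    (H : ∑ j, a j * ∑ i, g i j = ∑ i, a i * ∑ j, g i j) :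
    ((∑ i, ((∑ j, (g i j - a i)^2) - (∑ k, a k ^ 2)))/2
      - 2 * ((∑ i, a i * ((∑ j, (g i j - a i)) - ∑ j, a j))/2)) / 2
    = (∑ i, ∑ j, (g i j - a i - a j)^2) / 4 := by
  have hcard : (Finset.univ : Finset (Fin d)).card = d := by simp
  have hR : ∑ i, ∑ j, a j * g i j = ∑ j, a j * ∑ i, g i j := by
    rw [Finset.sum_comm]
    exact Finset.sum_congr rfl fun j _ => (Finset.mul_sum _ _ _).symm
  have h1 : ∑ i, ∑ j, (g i j - a i - a j)^2
      = (∑ i, ∑ j, (g i j - a i)^2) - 2*(∑ i, ∑ j, a j * g i j)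
        + (2*((∑ i, a i)*(∑ i, a i)) + d*(∑ k, a k ^ 2)) := by
    have e : ∀ i : Fin d, ∑ j, (g i j - a i - a j)^2
        = (∑ j, (g i j - a i)^2) - 2*(∑ j, a j * g i j)
          + ((2*a i)*(∑ j, a j) + ∑ j, a j ^ 2) := by
      intro i
      have pt : ∀ j, (g i j - a i - a j)^2
          = ((g i j - a i)^2 - 2*(a j * g i j)) + ((2*a i)*a j + a j^2) := fun j => by ring
      rw [Finset.sum_congr rfl fun j _ => pt j, Finset.sum_add_distrib,
        Finset.sum_sub_distrib, Finset.sum_add_distrib, ← Finset.mul_sum, ← Finset.mul_sum]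
    rw [Finset.sum_congr rfl fun i _ => e i, Finset.sum_add_distrib, Finset.sum_sub_distrib,
      Finset.sum_add_distrib, ← Finset.mul_sum, ← Finset.sum_mul, ← Finset.mul_sum,
      Finset.sum_const, hcard, nsmul_eq_mul]
    ring
  have h2 : ∑ i, a i * ((∑ j, (g i j - a i)) - ∑ j, a j)
      = (∑ i, a i * ∑ j, g i j) - d*(∑ k, a k ^ 2) - (∑ i, a i)*(∑ i, a i) := by
    have e : ∀ i : Fin d, a i * ((∑ j, (g i j - a i)) - ∑ j, a j)
        = a i * (∑ j, g i j) - d * a i ^ 2 - a i * ∑ j, a j := by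
      intro i
      rw [Finset.sum_sub_distrib, Finset.sum_const, hcard, nsmul_eq_mul]
      ring
    rw [Finset.sum_congr rfl fun i _ => e i, Finset.sum_sub_distrib, Finset.sum_sub_distrib,
      ← Finset.mul_sum, ← Finset.sum_mul]
  have h3 : ∑ i, ((∑ j, (g i j - a i)^2) - (∑ k, a k ^ 2))
      = (∑ i, ∑ j, (g i j - a i)^2) - d*(∑ k, a k ^ 2) := by
    rw [Finset.sum_sub_distrib, Finset.sum_const, hcard, nsmul_eq_mul]
  rw [h3, h2, h1, hR, H]
  ring

lemma gammaOp_eq (G : SimpleGraph V) [G.LocallyFinite] (f g : V → ℝ) (x : V) :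
    gammaOp G f g x = (∑ y ∈ G.neighborFinset x, (f y - f x) * (g y - g x)) / 2 := by
  unfold gammaOp graphLap
  congr 1
  rw [Finset.mul_sum, Finset.mul_sum, ← Finset.sum_sub_distrib, ← Finset.sum_sub_distrib]
  exact Finset.sum_congr rfl fun y _ => by ring

/-- In a simple, connected, `d`-regular graph, if `x` is Ricci flat then
`Γ₂(f)(x) ≥ 0` for every `f : V → ℝ`; in particular the Bakry–Émery curvature satisfies
`K_∞(x) ≥ 0` (that is, `0` is a lower curvature bound at `x`). -/
theorem stmt_4 (G : SimpleGraph V) [G.LocallyFinite] (hconn : G.Connected)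
    (d : ℕ) (hreg : G.IsRegularOfDegree d) (x : V) (hx : RicciFlatAt G d x) :
    (∀ f : V → ℝ, 0 ≤ gamma2Op G f x) ∧ 0 ∈ curvBounds G x := by
  obtain ⟨η, hadj, hne, hrg⟩ := hx
  have hx0 : x ∈ closedBall1 G x := Set.mem_insert _ _
  have hball : ∀ i, η i x ∈ closedBall1 G x := fun i =>
    Set.mem_insert_of_mem _ ((G.mem_neighborSet x (η i x)).mpr (hadj i x hx0))
  have hinj : ∀ u ∈ closedBall1 G x, Function.Injective fun i => η i u := by
    intro u hu i j h
    by_contra hij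
    exact hne i j hij u hu h
  have hNbr : ∀ u ∈ closedBall1 G x,
      G.neighborFinset u = Finset.image (fun i => η i u) Finset.univ := by
    intro u hu
    refine (Finset.eq_of_subset_of_card_le ?_ ?_).symm
    · intro v hv
      obtain ⟨i, -, rfl⟩ := Finset.mem_image.mp hv
      exact (G.mem_neighborFinset u (η i u)).mpr (hadj i u hu)
    · rw [Finset.card_image_of_injective _ (hinj u hu), Finset.card_univ, Fintype.card_fin]
      exact le_of_eq (hreg u)
  have hSum : ∀ u ∈ closedBall1 G x, ∀ F : V → ℝ,
      ∑ y ∈ G.neighborFinset u, F y = ∑ i, F (η i u) := by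
    intro u hu F
    rw [hNbr u hu, Finset.sum_image fun i _ j _ h => hinj u hu h]
  have hLap : ∀ u ∈ closedBall1 G x, ∀ F : V → ℝ,
      graphLap G F u = ∑ i, (F (η i u) - F u) := by
    intro u hu F
    unfold graphLap
    exact hSum u hu fun y => F y - F u
  have hswap : ∀ i, ∀ F : V → ℝ, ∑ j, F (η j (η i x)) = ∑ j, F (η i (η j x)) := by
    intro i F
    have hinj1 : Function.Injective fun j => η j (η i x) := hinj _ (hball i)
    have hset : (Finset.univ.image fun j => η j (η i x))
        = Finset.univ.image fun j => η i (η j x) := by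
      apply Finset.coe_injective
      rw [Finset.coe_image, Finset.coe_image, Finset.coe_univ, Set.image_univ, Set.image_univ]
      exact hrg i
    have hinj2 : Set.InjOn (fun j => η i (η j x)) (Finset.univ : Finset (Fin d)) := by
      apply Finset.injOn_of_card_image_eq
      rw [← hset, Finset.card_image_of_injective _ hinj1]
    have e1 : ∑ v ∈ Finset.univ.image (fun j => η j (η i x)), F v
        = ∑ j, F (η j (η i x)) := Finset.sum_image fun p _ q _ h => hinj1 h
    have e2 : ∑ v ∈ Finset.univ.image (fun j => η i (η j x)), F v
        = ∑ j, F (η i (η j x)) := Finset.sum_image fun p hp q hq h => hinj2 hp hq h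
    rw [← e1, hset, e2]
  have main : ∀ f : V → ℝ, gamma2Op G f x
      = (∑ i, ∑ j, ((fun i j => f (η i (η j x)) - f x) i j
          - (fun i => f (η i x) - f x) i - (fun i => f (η i x) - f x) j)^2) / 4 := by
    intro f
    set a : Fin d → ℝ := fun i => f (η i x) - f x with ha
    set gm : Fin d → Fin d → ℝ := fun i j => f (η i (η j x)) - f x with hgm
    have hΓx : gammaOp G f f x = (∑ k, a k ^ 2) / 2 := by
      rw [gammaOp_eq, hSum x hx0 fun y => (f y - f x) * (f y - f x)]
      congr 1
      exact Finset.sum_congr rfl fun k _ => by simp [ha, sq]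
    have hΓi : ∀ i, gammaOp G f f (η i x) = (∑ j, (gm i j - a i)^2) / 2 := by
      intro i
      rw [gammaOp_eq, hSum (η i x) (hball i) fun y => (f y - f (η i x)) * (f y - f (η i x)),
        hswap i fun v => (f v - f (η i x)) * (f v - f (η i x))]
      congr 1
      exact Finset.sum_congr rfl fun j _ => by simp only [ha, hgm]; ring
    have hDf : graphLap G f x = ∑ j, a j := hLap x hx0 f
    have hDfi : ∀ i, graphLap G f (η i x) = ∑ j, (gm i j - a i) := by
      intro i
      rw [hLap (η i x) (hball i) f, hswap i fun v => f v - f (η i x)]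
      exact Finset.sum_congr rfl fun j _ => by simp only [ha, hgm]; ring
    have hLapΓ : graphLap G (fun z => gammaOp G f f z) x
        = (∑ i, ((∑ j, (gm i j - a i)^2) - (∑ k, a k ^ 2))) / 2 := by
      rw [hLap x hx0 fun z => gammaOp G f f z, Finset.sum_div]
      exact Finset.sum_congr rfl fun i _ => by rw [hΓi i, hΓx, div_sub_div_same]
    have hΓfΔ : gammaOp G f (graphLap G f) x
        = (∑ i, a i * ((∑ j, (gm i j - a i)) - ∑ j, a j)) / 2 := by
      rw [gammaOp_eq, hSum x hx0 fun y => (f y - f x) * (graphLap G f y - graphLap G f x)]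
      congr 1
      exact Finset.sum_congr rfl fun i _ => by rw [hDfi i, hDf]
    have hcol : ∀ k, ∑ m, gm m k = ∑ m, gm k m := fun k => hswap k fun v => f v - f x
    have H : ∑ j, a j * ∑ i, gm i j = ∑ i, a i * ∑ j, gm i j :=
      Finset.sum_congr rfl fun k _ => by rw [hcol k]
    show (graphLap G (fun z => gammaOp G f f z) x - 2 * gammaOp G f (graphLap G f) x) / 2
        = (∑ i, ∑ j, (gm i j - a i - a j)^2) / 4
    rw [hLapΓ, hΓfΔ]
    exact key_identity d a gm H
  constructor
  · intro f
    rw [main f]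
    positivity
  · intro f
    rw [zero_mul]
    rw [main f]
    positivity
end

section
/- Let G be a d_G-regular graph that is Ricci flat at a vertex x and H a d_H-regular graph that is Ricci flat at a vertex y. Then the tensor product G⊗H, the Cartesian product G×H, and the strong product G⊠H are each Ricci flat at the vertex (x,y). Moreover, the same holds with 'Ricci flat' replaced throughout by '(R)-Ricci flat', by '(S)-Ricci flat', and by '(RS)-Ricci flat'. -/
open Filter
open scoped Classical

variable {V : Type*}

/-- The tensor product `G ⊗ H`: only diagonal edges. -/
def tensorProd {α β : Type*} (G : SimpleGraph α) (H : SimpleGraph β) : SimpleGraph (α × β) where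
  Adj p q := G.Adj p.1 q.1 ∧ H.Adj p.2 q.2
  symm := ⟨fun p q h => ⟨h.1.symm, h.2.symm⟩⟩
  loopless := ⟨fun p h => G.loopless.irrefl p.1 h.1⟩

/-- The Cartesian product `G × H`: horizontal and vertical edges. -/
def cartProd {α β : Type*} (G : SimpleGraph α) (H : SimpleGraph β) : SimpleGraph (α × β) where
  Adj p q := (G.Adj p.1 q.1 ∧ p.2 = q.2) ∨ (p.1 = q.1 ∧ H.Adj p.2 q.2)
  symm := by
    constructor
    rintro p q (⟨h1, h2⟩ | ⟨h1, h2⟩)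
    · exact Or.inl ⟨h1.symm, h2.symm⟩
    · exact Or.inr ⟨h1.symm, h2.symm⟩
  loopless := by
    constructor
    rintro p (⟨h1, -⟩ | ⟨-, h2⟩)
    · exact G.loopless.irrefl p.1 h1
    · exact H.loopless.irrefl p.2 h2

/-- The strong product `G ⊠ H`: horizontal, vertical and diagonal edges. -/
def strongProd {α β : Type*} (G : SimpleGraph α) (H : SimpleGraph β) : SimpleGraph (α × β) where
  Adj p q := (G.Adj p.1 q.1 ∧ p.2 = q.2) ∨ (p.1 = q.1 ∧ H.Adj p.2 q.2) ∨
    (G.Adj p.1 q.1 ∧ H.Adj p.2 q.2)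
  symm := by
    constructor
    rintro p q (⟨h1, h2⟩ | ⟨h1, h2⟩ | ⟨h1, h2⟩)
    · exact Or.inl ⟨h1.symm, h2.symm⟩
    · exact Or.inr (Or.inl ⟨h1.symm, h2.symm⟩)
    · exact Or.inr (Or.inr ⟨h1.symm, h2.symm⟩)
  loopless := by
    constructor
    rintro p (⟨h1, -⟩ | ⟨-, h2⟩ | ⟨h1, -⟩)
    · exact G.loopless.irrefl p.1 h1
    · exact H.loopless.irrefl p.2 h2
    · exact G.loopless.irrefl p.1 h1


section RicciAux

variable {α β : Type*} {G : SimpleGraph α} {H : SimpleGraph β}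

lemma mem_ball_iff {x u : α} : u ∈ closedBall1 G x ↔ u = x ∨ G.Adj x u := by
  simp [closedBall1, SimpleGraph.mem_neighborSet]

lemma ball_tensor {x : α} {y : β} {p : α × β}
    (hp : p ∈ closedBall1 (tensorProd G H) (x, y)) :
    p.1 ∈ closedBall1 G x ∧ p.2 ∈ closedBall1 H y := by
  rcases mem_ball_iff.mp hp with h | h
  · subst h; exact ⟨mem_ball_iff.mpr (Or.inl rfl), mem_ball_iff.mpr (Or.inl rfl)⟩
  · exact ⟨mem_ball_iff.mpr (Or.inr h.1), mem_ball_iff.mpr (Or.inr h.2)⟩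

lemma ball_cart {x : α} {y : β} {p : α × β}
    (hp : p ∈ closedBall1 (cartProd G H) (x, y)) :
    p.1 ∈ closedBall1 G x ∧ p.2 ∈ closedBall1 H y := by
  rcases mem_ball_iff.mp hp with h | (⟨h1, h2⟩ | ⟨h1, h2⟩)
  · subst h; exact ⟨mem_ball_iff.mpr (Or.inl rfl), mem_ball_iff.mpr (Or.inl rfl)⟩
  · exact ⟨mem_ball_iff.mpr (Or.inr h1), mem_ball_iff.mpr (Or.inl h2.symm)⟩
  · exact ⟨mem_ball_iff.mpr (Or.inl h1.symm), mem_ball_iff.mpr (Or.inr h2)⟩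

lemma ball_strong {x : α} {y : β} {p : α × β}
    (hp : p ∈ closedBall1 (strongProd G H) (x, y)) :
    p.1 ∈ closedBall1 G x ∧ p.2 ∈ closedBall1 H y := by
  rcases mem_ball_iff.mp hp with h | (⟨h1, h2⟩ | ⟨h1, h2⟩ | ⟨h1, h2⟩)
  · subst h; exact ⟨mem_ball_iff.mpr (Or.inl rfl), mem_ball_iff.mpr (Or.inl rfl)⟩
  · exact ⟨mem_ball_iff.mpr (Or.inr h1), mem_ball_iff.mpr (Or.inl h2.symm)⟩
  · exact ⟨mem_ball_iff.mpr (Or.inl h1.symm), mem_ball_iff.mpr (Or.inr h2)⟩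
  · exact ⟨mem_ball_iff.mpr (Or.inr h1), mem_ball_iff.mpr (Or.inr h2)⟩

lemma range_comp_equiv {γ δ W : Type*} (e : γ ≃ δ) (f : δ → W) :
    Set.range (fun k => f (e k)) = Set.range f :=
  e.surjective.range_comp f

/-- From condition (iii): for every `a i'` there is `i''` with `η a (η i'' x) = η i' (η a x)`. -/
lemma cond3_fwd {d : ℕ} {x : α} {η : Fin d → α → α}
    (h : ∀ i, Set.range (fun j => η j (η i x)) = Set.range (fun j => η i (η j x)))
    (a i' : Fin d) : ∃ i'', η a (η i'' x) = η i' (η a x) := by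
  have : η i' (η a x) ∈ Set.range (fun j => η a (η j x)) := by
    rw [← h a]; exact ⟨i', rfl⟩
  exact this

lemma cond3_bwd {d : ℕ} {x : α} {η : Fin d → α → α}
    (h : ∀ i, Set.range (fun j => η j (η i x)) = Set.range (fun j => η i (η j x)))
    (a i' : Fin d) : ∃ i'', η i'' (η a x) = η a (η i' x) := by
  have : η a (η i' x) ∈ Set.range (fun j => η j (η a x)) := by
    rw [h a]; exact ⟨i', rfl⟩
  exact this

lemma tensor_master {dG dH : ℕ} {x : α} {y : β} {η : Fin dG → α → α} {θ : Fin dH → β → β}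
    (hη : IsRicciFlatMaps G dG x η) (hθ : IsRicciFlatMaps H dH y θ) :
    ∃ ζ : Fin (dG * dH) → α × β → α × β,
      IsRicciFlatMaps (tensorProd G H) (dG * dH) (x, y) ζ ∧
      ((∀ i, η i (η i x) = x) → (∀ j, θ j (θ j y) = y) →
        ∀ k, ζ k (ζ k (x, y)) = (x, y)) ∧
      ((∀ i i', η i' (η i x) = η i (η i' x)) → (∀ j j', θ j' (θ j y) = θ j (θ j' y)) →
        ∀ k k', ζ k' (ζ k (x, y)) = ζ k (ζ k' (x, y))) := by
  obtain ⟨hη1, hη2, hη3⟩ := hη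
  obtain ⟨hθ1, hθ2, hθ3⟩ := hθ
  set Z : Fin dG × Fin dH → α × β → α × β := fun m p => (η m.1 p.1, θ m.2 p.2) with hZ
  set e : Fin (dG * dH) ≃ Fin dG × Fin dH := finProdFinEquiv.symm with he
  refine ⟨fun k => Z (e k), ⟨?_, ?_, ?_⟩, ?_, ?_⟩
  · intro k u hu
    obtain ⟨hu1, hu2⟩ := ball_tensor hu
    exact ⟨hη1 (e k).1 u.1 hu1, hθ1 (e k).2 u.2 hu2⟩
  · intro k k' hkk' u hu hEq
    obtain ⟨hu1, hu2⟩ := ball_tensor hu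
    have hne : e k ≠ e k' := fun h => hkk' (e.injective h)
    rw [Prod.mk.injEq] at hEq
    by_cases h1 : (e k).1 = (e k').1
    · have h2 : (e k).2 ≠ (e k').2 := fun h => hne (Prod.ext h1 h)
      exact hθ2 _ _ h2 u.2 hu2 hEq.2
    · exact hη2 _ _ h1 u.1 hu1 hEq.1
  · intro k
    rw [range_comp_equiv e (fun m => Z m (Z (e k) (x, y))),
        range_comp_equiv e (fun m => Z (e k) (Z m (x, y)))]
    generalize e k = m
    obtain ⟨a, b⟩ := m
    ext p
    constructor
    · rintro ⟨⟨i', j'⟩, rfl⟩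
      obtain ⟨i'', hi⟩ := cond3_fwd hη3 a i'
      obtain ⟨j'', hj⟩ := cond3_fwd hθ3 b j'
      exact ⟨(i'', j''), by simp [hZ, hi, hj]⟩
    · rintro ⟨⟨i', j'⟩, rfl⟩
      obtain ⟨i'', hi⟩ := cond3_bwd hη3 a i'
      obtain ⟨j'', hj⟩ := cond3_bwd hθ3 b j'
      exact ⟨(i'', j''), by simp [hZ, hi, hj]⟩
  · intro hR hR' k
    simp [hZ, hR (e k).1, hR' (e k).2]
  · intro hS hS' k k'
    simp [hZ, hS (e k).1 (e k').1, hS' (e k).2 (e k').2]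


lemma cart_master {dG dH : ℕ} {x : α} {y : β} {η : Fin dG → α → α} {θ : Fin dH → β → β}
    (hη : IsRicciFlatMaps G dG x η) (hθ : IsRicciFlatMaps H dH y θ) :
    ∃ ζ : Fin (dG + dH) → α × β → α × β,
      IsRicciFlatMaps (cartProd G H) (dG + dH) (x, y) ζ ∧
      ((∀ i, η i (η i x) = x) → (∀ j, θ j (θ j y) = y) →
        ∀ k, ζ k (ζ k (x, y)) = (x, y)) ∧
      ((∀ i i', η i' (η i x) = η i (η i' x)) → (∀ j j', θ j' (θ j y) = θ j (θ j' y)) →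
        ∀ k k', ζ k' (ζ k (x, y)) = ζ k (ζ k' (x, y))) := by
  obtain ⟨hη1, hη2, hη3⟩ := hη
  obtain ⟨hθ1, hθ2, hθ3⟩ := hθ
  set Z : (Fin dG ⊕ Fin dH) → α × β → α × β := fun m p =>
    match m with
    | Sum.inl i => (η i p.1, p.2)
    | Sum.inr j => (p.1, θ j p.2) with hZ
  set e : Fin (dG + dH) ≃ Fin dG ⊕ Fin dH := finSumFinEquiv.symm with he
  refine ⟨fun k => Z (e k), ⟨?_, ?_, ?_⟩, ?_, ?_⟩
  · intro k u hu
    obtain ⟨hu1, hu2⟩ := ball_cart hu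
    show (cartProd G H).Adj u (Z (e k) u)
    rcases e k with i | j
    · exact Or.inl ⟨hη1 i u.1 hu1, rfl⟩
    · exact Or.inr ⟨rfl, hθ1 j u.2 hu2⟩
  · intro k k' hkk' u hu
    obtain ⟨hu1, hu2⟩ := ball_cart hu
    have hne : e k ≠ e k' := fun h => hkk' (e.injective h)
    show Z (e k) u ≠ Z (e k') u
    rcases hm : e k with i | j <;> rcases hm' : e k' with i' | j' <;>
      rw [hm, hm'] at hne <;> intro hEq <;> simp only [hZ, Prod.mk.injEq] at hEq
    · exact hη2 i i' (fun h => hne (by rw [h])) u.1 hu1 hEq.1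
    · exact (hη1 i u.1 hu1).ne' hEq.1
    · exact (hη1 i' u.1 hu1).ne' hEq.1.symm
    · exact hθ2 j j' (fun h => hne (by rw [h])) u.2 hu2 hEq.2
  · intro k
    rw [range_comp_equiv e (fun m => Z m (Z (e k) (x, y))),
        range_comp_equiv e (fun m => Z (e k) (Z m (x, y)))]
    generalize e k = m
    ext p
    rcases m with a | b
    · constructor
      · rintro ⟨i' | j', rfl⟩
        · obtain ⟨i'', hi⟩ := cond3_fwd hη3 a i'
          exact ⟨Sum.inl i'', by simp [hZ, hi]⟩
        · exact ⟨Sum.inr j', by simp [hZ]⟩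
      · rintro ⟨i' | j', rfl⟩
        · obtain ⟨i'', hi⟩ := cond3_bwd hη3 a i'
          exact ⟨Sum.inl i'', by simp [hZ, hi]⟩
        · exact ⟨Sum.inr j', by simp [hZ]⟩
    · constructor
      · rintro ⟨i' | j', rfl⟩
        · exact ⟨Sum.inl i', by simp [hZ]⟩
        · obtain ⟨j'', hj⟩ := cond3_fwd hθ3 b j'
          exact ⟨Sum.inr j'', by simp [hZ, hj]⟩
      · rintro ⟨i' | j', rfl⟩
        · exact ⟨Sum.inl i', by simp [hZ]⟩
        · obtain ⟨j'', hj⟩ := cond3_bwd hθ3 b j'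
          exact ⟨Sum.inr j'', by simp [hZ, hj]⟩
  · intro hR hR' k
    show Z (e k) (Z (e k) (x, y)) = (x, y)
    rcases e k with i | j
    · simp [hZ, hR i]
    · simp [hZ, hR' j]
  · intro hS hS' k k'
    show Z (e k') (Z (e k) (x, y)) = Z (e k) (Z (e k') (x, y))
    rcases e k with i | j <;> rcases e k' with i' | j'
    · simp [hZ, hS i i']
    · simp [hZ]
    · simp [hZ]
    · simp [hZ, hS' j j']

lemma strong_master {dG dH : ℕ} {x : α} {y : β} {η : Fin dG → α → α} {θ : Fin dH → β → β}
    (hη : IsRicciFlatMaps G dG x η) (hθ : IsRicciFlatMaps H dH y θ) :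
    ∃ ζ : Fin (dG + dH + dG * dH) → α × β → α × β,
      IsRicciFlatMaps (strongProd G H) (dG + dH + dG * dH) (x, y) ζ ∧
      ((∀ i, η i (η i x) = x) → (∀ j, θ j (θ j y) = y) →
        ∀ k, ζ k (ζ k (x, y)) = (x, y)) ∧
      ((∀ i i', η i' (η i x) = η i (η i' x)) → (∀ j j', θ j' (θ j y) = θ j (θ j' y)) →
        ∀ k k', ζ k' (ζ k (x, y)) = ζ k (ζ k' (x, y))) := by
  obtain ⟨hη1, hη2, hη3⟩ := hη
  obtain ⟨hθ1, hθ2, hθ3⟩ := hθ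
  set Z : ((Fin dG ⊕ Fin dH) ⊕ Fin dG × Fin dH) → α × β → α × β := fun m p =>
    match m with
    | Sum.inl (Sum.inl i) => (η i p.1, p.2)
    | Sum.inl (Sum.inr j) => (p.1, θ j p.2)
    | Sum.inr (i, j) => (η i p.1, θ j p.2) with hZ
  set e : Fin (dG + dH + dG * dH) ≃ (Fin dG ⊕ Fin dH) ⊕ Fin dG × Fin dH :=
    finSumFinEquiv.symm.trans
      (Equiv.sumCongr finSumFinEquiv.symm finProdFinEquiv.symm) with he
  refine ⟨fun k => Z (e k), ⟨?_, ?_, ?_⟩, ?_, ?_⟩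
  · intro k u hu
    obtain ⟨hu1, hu2⟩ := ball_strong hu
    show (strongProd G H).Adj u (Z (e k) u)
    rcases e k with (i | j) | ⟨i, j⟩
    · exact Or.inl ⟨hη1 i u.1 hu1, rfl⟩
    · exact Or.inr (Or.inl ⟨rfl, hθ1 j u.2 hu2⟩)
    · exact Or.inr (Or.inr ⟨hη1 i u.1 hu1, hθ1 j u.2 hu2⟩)
  · intro k k' hkk' u hu
    obtain ⟨hu1, hu2⟩ := ball_strong hu
    have hne : e k ≠ e k' := fun h => hkk' (e.injective h)
    show Z (e k) u ≠ Z (e k') u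
    rcases hm : e k with (i | j) | ⟨i, j⟩ <;> rcases hm' : e k' with (i' | j') | ⟨i', j'⟩ <;>
      rw [hm, hm'] at hne <;> intro hEq <;> simp only [hZ, Prod.mk.injEq] at hEq
    · exact hη2 i i' (fun h => hne (by rw [h])) u.1 hu1 hEq.1
    · exact (hη1 i u.1 hu1).ne' hEq.1
    · exact (hθ1 j' u.2 hu2).ne hEq.2
    · exact (hη1 i' u.1 hu1).ne' hEq.1.symm
    · exact hθ2 j j' (fun h => hne (by rw [h])) u.2 hu2 hEq.2
    · exact (hη1 i' u.1 hu1).ne hEq.1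
    · exact (hθ1 j u.2 hu2).ne' hEq.2
    · exact (hη1 i u.1 hu1).ne' hEq.1
    · by_cases h1 : i = i'
      · have h2 : j ≠ j' := fun h => hne (by rw [h1, h])
        exact hθ2 j j' h2 u.2 hu2 hEq.2
      · exact hη2 i i' h1 u.1 hu1 hEq.1
  · intro k
    rw [range_comp_equiv e (fun m => Z m (Z (e k) (x, y))),
        range_comp_equiv e (fun m => Z (e k) (Z m (x, y)))]
    generalize e k = m
    ext p
    rcases m with (a | b) | ⟨a, b⟩
    · constructor
      · rintro ⟨(i' | j') | ⟨i', j'⟩, rfl⟩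
        · obtain ⟨i'', hi⟩ := cond3_fwd hη3 a i'
          exact ⟨Sum.inl (Sum.inl i''), by simp [hZ, hi]⟩
        · exact ⟨Sum.inl (Sum.inr j'), by simp [hZ]⟩
        · obtain ⟨i'', hi⟩ := cond3_fwd hη3 a i'
          exact ⟨Sum.inr (i'', j'), by simp [hZ, hi]⟩
      · rintro ⟨(i' | j') | ⟨i', j'⟩, rfl⟩
        · obtain ⟨i'', hi⟩ := cond3_bwd hη3 a i'
          exact ⟨Sum.inl (Sum.inl i''), by simp [hZ, hi]⟩
        · exact ⟨Sum.inl (Sum.inr j'), by simp [hZ]⟩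
        · obtain ⟨i'', hi⟩ := cond3_bwd hη3 a i'
          exact ⟨Sum.inr (i'', j'), by simp [hZ, hi]⟩
    · constructor
      · rintro ⟨(i' | j') | ⟨i', j'⟩, rfl⟩
        · exact ⟨Sum.inl (Sum.inl i'), by simp [hZ]⟩
        · obtain ⟨j'', hj⟩ := cond3_fwd hθ3 b j'
          exact ⟨Sum.inl (Sum.inr j''), by simp [hZ, hj]⟩
        · obtain ⟨j'', hj⟩ := cond3_fwd hθ3 b j'
          exact ⟨Sum.inr (i', j''), by simp [hZ, hj]⟩
      · rintro ⟨(i' | j') | ⟨i', j'⟩, rfl⟩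
        · exact ⟨Sum.inl (Sum.inl i'), by simp [hZ]⟩
        · obtain ⟨j'', hj⟩ := cond3_bwd hθ3 b j'
          exact ⟨Sum.inl (Sum.inr j''), by simp [hZ, hj]⟩
        · obtain ⟨j'', hj⟩ := cond3_bwd hθ3 b j'
          exact ⟨Sum.inr (i', j''), by simp [hZ, hj]⟩
    · constructor
      · rintro ⟨(i' | j') | ⟨i', j'⟩, rfl⟩
        · obtain ⟨i'', hi⟩ := cond3_fwd hη3 a i'
          exact ⟨Sum.inl (Sum.inl i''), by simp [hZ, hi]⟩
        · obtain ⟨j'', hj⟩ := cond3_fwd hθ3 b j'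
          exact ⟨Sum.inl (Sum.inr j''), by simp [hZ, hj]⟩
        · obtain ⟨i'', hi⟩ := cond3_fwd hη3 a i'
          obtain ⟨j'', hj⟩ := cond3_fwd hθ3 b j'
          exact ⟨Sum.inr (i'', j''), by simp [hZ, hi, hj]⟩
      · rintro ⟨(i' | j') | ⟨i', j'⟩, rfl⟩
        · obtain ⟨i'', hi⟩ := cond3_bwd hη3 a i'
          exact ⟨Sum.inl (Sum.inl i''), by simp [hZ, hi]⟩
        · obtain ⟨j'', hj⟩ := cond3_bwd hθ3 b j'
          exact ⟨Sum.inl (Sum.inr j''), by simp [hZ, hj]⟩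
        · obtain ⟨i'', hi⟩ := cond3_bwd hη3 a i'
          obtain ⟨j'', hj⟩ := cond3_bwd hθ3 b j'
          exact ⟨Sum.inr (i'', j''), by simp [hZ, hi, hj]⟩
  · intro hR hR' k
    show Z (e k) (Z (e k) (x, y)) = (x, y)
    rcases e k with (i | j) | ⟨i, j⟩
    · simp [hZ, hR i]
    · simp [hZ, hR' j]
    · simp [hZ, hR i, hR' j]
  · intro hS hS' k k'
    show Z (e k') (Z (e k) (x, y)) = Z (e k) (Z (e k') (x, y))
    rcases e k with (i | j) | ⟨i, j⟩ <;> rcases e k' with (i' | j') | ⟨i', j'⟩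
    · simp [hZ, hS i i']
    · simp [hZ]
    · simp [hZ, hS i i']
    · simp [hZ]
    · simp [hZ, hS' j j']
    · simp [hZ, hS' j j']
    · simp [hZ, hS i i']
    · simp [hZ, hS' j j']
    · simp [hZ, hS i i', hS' j j']

end RicciAux


/-- If `G` is `d_G`-regular and Ricci flat at `x`, and `H` is
`d_H`-regular and Ricci flat at `y`, then the tensor product, the Cartesian product and the
strong product are Ricci flat at `(x,y)`; and likewise for (R)-, (S)- and (RS)-Ricci
flatness. -/
theorem stmt_15 {α β : Type*} (G : SimpleGraph α) (H : SimpleGraph β)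
    [G.LocallyFinite] [H.LocallyFinite] (dG dH : ℕ)
    (hG : G.IsRegularOfDegree dG) (hH : H.IsRegularOfDegree dH) (x : α) (y : β) :
    (RicciFlatAt G dG x → RicciFlatAt H dH y →
      RicciFlatAt (tensorProd G H) (dG * dH) (x, y) ∧
      RicciFlatAt (cartProd G H) (dG + dH) (x, y) ∧
      RicciFlatAt (strongProd G H) (dG + dH + dG * dH) (x, y)) ∧
    (RRicciFlatAt G dG x → RRicciFlatAt H dH y →
      RRicciFlatAt (tensorProd G H) (dG * dH) (x, y) ∧
      RRicciFlatAt (cartProd G H) (dG + dH) (x, y) ∧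
      RRicciFlatAt (strongProd G H) (dG + dH + dG * dH) (x, y)) ∧
    (SRicciFlatAt G dG x → SRicciFlatAt H dH y →
      SRicciFlatAt (tensorProd G H) (dG * dH) (x, y) ∧
      SRicciFlatAt (cartProd G H) (dG + dH) (x, y) ∧
      SRicciFlatAt (strongProd G H) (dG + dH + dG * dH) (x, y)) ∧
    (RSRicciFlatAt G dG x → RSRicciFlatAt H dH y →
      RSRicciFlatAt (tensorProd G H) (dG * dH) (x, y) ∧
      RSRicciFlatAt (cartProd G H) (dG + dH) (x, y) ∧
      RSRicciFlatAt (strongProd G H) (dG + dH + dG * dH) (x, y)) := by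
  refine ⟨?_, ?_, ?_, ?_⟩
  · rintro ⟨η, hη⟩ ⟨θ, hθ⟩
    obtain ⟨ζt, ht, -, -⟩ := tensor_master hη hθ
    obtain ⟨ζc, hc, -, -⟩ := cart_master hη hθ
    obtain ⟨ζs, hs, -, -⟩ := strong_master hη hθ
    exact ⟨⟨ζt, ht⟩, ⟨ζc, hc⟩, ⟨ζs, hs⟩⟩
  · rintro ⟨η, hη, hRG⟩ ⟨θ, hθ, hRH⟩
    obtain ⟨ζt, ht, hRt, -⟩ := tensor_master hη hθ
    obtain ⟨ζc, hc, hRc, -⟩ := cart_master hη hθ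
    obtain ⟨ζs, hs, hRs, -⟩ := strong_master hη hθ
    exact ⟨⟨ζt, ht, hRt hRG hRH⟩, ⟨ζc, hc, hRc hRG hRH⟩, ⟨ζs, hs, hRs hRG hRH⟩⟩
  · rintro ⟨η, hη, hSG⟩ ⟨θ, hθ, hSH⟩
    obtain ⟨ζt, ht, -, hSt⟩ := tensor_master hη hθ
    obtain ⟨ζc, hc, -, hSc⟩ := cart_master hη hθ
    obtain ⟨ζs, hs, -, hSs⟩ := strong_master hη hθ
    exact ⟨⟨ζt, ht, hSt hSG hSH⟩, ⟨ζc, hc, hSc hSG hSH⟩, ⟨ζs, hs, hSs hSG hSH⟩⟩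
  · rintro ⟨η, hη, hRG, hSG⟩ ⟨θ, hθ, hRH, hSH⟩
    obtain ⟨ζt, ht, hRt, hSt⟩ := tensor_master hη hθ
    obtain ⟨ζc, hc, hRc, hSc⟩ := cart_master hη hθ
    obtain ⟨ζs, hs, hRs, hSs⟩ := strong_master hη hθ
    exact ⟨⟨ζt, ht, hRt hRG hRH, hSt hSG hSH⟩, ⟨ζc, hc, hRc hRG hRH, hSc hSG hSH⟩,
      ⟨ζs, hs, hRs hRG hRH, hSs hSG hSH⟩⟩
end
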